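/- arXiv:2302.13787 — 3 statements merged into one kernel-verified Lean document; each statement's English description precedes it below -/
import Mathlib

section
/- Let R be a ring, B = R[X_1,...,X_n] a polynomial ring with a weighted degree map λ, and J = (f_1,...,f_m) an ideal of B. Suppose (i) f̃_i = f_i for 1 ≤ i ≤ m−1 (i.e., f_1,...,f_{m−1} are λ-homogeneous), and (ii) f̃_m is a non-zerodivisor in B/(f_1,...,f_{m−1}). Then J̃ = (f_1,...,f_{m−1}, f̃_m). -/
open scoped BigOperators

/-- The (real) weighted degree of a monomial exponent `e` with weights `w`. -/
noncomputable def monWeight {n : ℕ} (w : Fin n → ℝ) (e : Fin n →₀ ℕ) : ℝ :=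
  ∑ i ∈ e.support, (e i : ℝ) * w i

/-- `p̃`: the sum of the monomials of `p` of maximal weighted degree. -/
noncomputable def topPart {R : Type*} [CommSemiring R] {n : ℕ} (w : Fin n → ℝ)
    (p : MvPolynomial (Fin n) R) : MvPolynomial (Fin n) R :=
  ∑ e ∈ p.support.filter
      (fun e => ∀ e' ∈ p.support, monWeight w e' ≤ monWeight w e),
    MvPolynomial.monomial e (p.coeff e)

/-- `Ĩ`: the ideal generated by the top parts of the elements of `I`. -/
noncomputable def topIdeal {R : Type*} [CommSemiring R] {n : ℕ} (w : Fin n → ℝ)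
    (I : Ideal (MvPolynomial (Fin n) R)) : Ideal (MvPolynomial (Fin n) R) :=
  Ideal.span (topPart w '' (I : Set (MvPolynomial (Fin n) R)))

namespace StmtSix

open MvPolynomial

variable {R : Type*} [CommRing R] {n : ℕ} {w : Fin n → ℝ}

lemma monWeight_eq (w : Fin n → ℝ) (e : Fin n →₀ ℕ) :
    monWeight w e = Finsupp.weight w e := by
  rw [monWeight, Finsupp.weight_apply, Finsupp.sum]
  exact Finset.sum_congr rfl fun i _ => (nsmul_eq_mul _ _).symm

lemma topPart_zero (w : Fin n → ℝ) : topPart w (0 : MvPolynomial (Fin n) R) = 0 := by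
  simp [topPart]

/-- Characterization of `topPart` via `weightedHomogeneousComponent`. -/
lemma exists_top {p : MvPolynomial (Fin n) R} (hp : p ≠ 0) :
    ∃ c : ℝ, (∀ e ∈ p.support, Finsupp.weight w e ≤ c) ∧
      (∃ e ∈ p.support, Finsupp.weight w e = c) ∧
      topPart w p = weightedHomogeneousComponent w c p := by
  classical
  have hne : (p.support.image fun e => Finsupp.weight w e).Nonempty :=
    Finset.Nonempty.image (MvPolynomial.support_nonempty.mpr hp) _
  set c := (p.support.image fun e => Finsupp.weight w e).max' hne with hc
  have hbound : ∀ e ∈ p.support, Finsupp.weight w e ≤ c := fun e he =>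
    Finset.le_max' _ _ (Finset.mem_image_of_mem _ he)
  obtain ⟨e0, he0, he0w⟩ := Finset.mem_image.mp (Finset.max'_mem _ hne)
  refine ⟨c, hbound, ⟨e0, he0, he0w⟩, ?_⟩
  rw [weightedHomogeneousComponent_apply, topPart]
  apply Finset.sum_congr _ fun _ _ => rfl
  apply Finset.filter_congr
  intro e he
  simp only [monWeight_eq]
  constructor
  · intro h
    refine le_antisymm (hbound e he) ?_
    rw [hc, ← he0w]
    exact h e0 he0
  · intro h e' he'
    exact (hbound e' he').trans h.ge

lemma topPart_hom {p : MvPolynomial (Fin n) R} (h : topPart w p = p) :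
    ∃ c, p.IsWeightedHomogeneous w c := by
  rcases eq_or_ne p 0 with rfl | hp
  · exact ⟨0, isWeightedHomogeneous_zero R w 0⟩
  obtain ⟨c, _, _, htop⟩ := exists_top (w := w) hp
  exact ⟨c, h ▸ htop ▸ weightedHomogeneousComponent_isWeightedHomogeneous c p⟩

lemma wHC_eq_zero_of_gt {p : MvPolynomial (Fin n) R} {c d : ℝ}
    (hb : ∀ e ∈ p.support, Finsupp.weight w e ≤ c) (h : c < d) :
    weightedHomogeneousComponent w d p = 0 :=
  weightedHomogeneousComponent_eq_zero' d p fun e he => ((hb e he).trans_lt h).ne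

lemma wHC_mul_left {a : MvPolynomial (Fin n) R} {c : ℝ}
    (ha : a.IsWeightedHomogeneous w c) (x : MvPolynomial (Fin n) R) (d : ℝ) :
    weightedHomogeneousComponent w d (a * x)
      = a * weightedHomogeneousComponent w (d - c) x := by
  classical
  ext e
  rw [coeff_weightedHomogeneousComponent, coeff_mul, coeff_mul]
  rcases em (Finsupp.weight w e = d) with h | h
  · rw [if_pos h]
    apply Finset.sum_congr rfl
    intro uv huv
    rcases em (coeff uv.1 a = 0) with h0 | h0
    · simp [h0]
    · have hu : Finsupp.weight w uv.1 = c := ha h0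
      have hsum : uv.1 + uv.2 = e := Finset.HasAntidiagonal.mem_antidiagonal.mp huv
      have hv : Finsupp.weight w uv.2 = d - c := by
        have := map_add (Finsupp.weight w) uv.1 uv.2
        rw [hsum, h, hu] at this
        linarith
      rw [coeff_weightedHomogeneousComponent, if_pos hv]
  · rw [if_neg h]
    symm
    apply Finset.sum_eq_zero
    intro uv huv
    rcases em (coeff uv.1 a = 0) with h0 | h0
    · simp [h0]
    · have hu : Finsupp.weight w uv.1 = c := ha h0
      have hsum : uv.1 + uv.2 = e := Finset.HasAntidiagonal.mem_antidiagonal.mp huv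
      rw [coeff_weightedHomogeneousComponent, if_neg, mul_zero]
      intro hv
      apply h
      have := map_add (Finsupp.weight w) uv.1 uv.2
      rw [hsum, hu, hv] at this
      linarith

lemma wHC_top_mul {a b : MvPolynomial (Fin n) R} {c t : ℝ}
    (ha : ∀ e ∈ a.support, Finsupp.weight w e ≤ c)
    (hb : ∀ e ∈ b.support, Finsupp.weight w e ≤ t) :
    weightedHomogeneousComponent w (c + t) (a * b)
      = weightedHomogeneousComponent w c a * weightedHomogeneousComponent w t b := by
  classical
  ext e
  rw [coeff_weightedHomogeneousComponent, coeff_mul, coeff_mul]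
  rcases em (Finsupp.weight w e = c + t) with h | h
  · rw [if_pos h]
    apply Finset.sum_congr rfl
    intro uv huv
    rcases em (coeff uv.1 a = 0) with h0 | h0
    · simp [coeff_weightedHomogeneousComponent, h0]
    rcases em (coeff uv.2 b = 0) with h1 | h1
    · simp [coeff_weightedHomogeneousComponent, h1]
    have hu : Finsupp.weight w uv.1 ≤ c := ha _ (mem_support_iff.mpr h0)
    have hv : Finsupp.weight w uv.2 ≤ t := hb _ (mem_support_iff.mpr h1)
    have hsum : uv.1 + uv.2 = e := Finset.HasAntidiagonal.mem_antidiagonal.mp huv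
    have hadd : Finsupp.weight w uv.1 + Finsupp.weight w uv.2 = c + t := by
      have := map_add (Finsupp.weight w) uv.1 uv.2
      rw [hsum, h] at this; linarith
    have hu' : Finsupp.weight w uv.1 = c := by linarith
    have hv' : Finsupp.weight w uv.2 = t := by linarith
    rw [coeff_weightedHomogeneousComponent, coeff_weightedHomogeneousComponent,
      if_pos hu', if_pos hv']
  · rw [if_neg h]
    symm
    apply Finset.sum_eq_zero
    intro uv huv
    rw [coeff_weightedHomogeneousComponent, coeff_weightedHomogeneousComponent]
    rcases em (Finsupp.weight w uv.1 = c) with hu | hu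
    · rcases em (Finsupp.weight w uv.2 = t) with hv | hv
      · exfalso
        apply h
        have hsum : uv.1 + uv.2 = e := Finset.HasAntidiagonal.mem_antidiagonal.mp huv
        have := map_add (Finsupp.weight w) uv.1 uv.2
        rw [hsum, hu, hv] at this; linarith
      · rw [if_neg hv, mul_zero]
    · rw [if_neg hu, zero_mul]

lemma mul_support_bound {a b : MvPolynomial (Fin n) R} {c t : ℝ}
    (ha : ∀ e ∈ a.support, Finsupp.weight w e ≤ c)
    (hb : ∀ e ∈ b.support, Finsupp.weight w e ≤ t) :
    ∀ e ∈ (a * b).support, Finsupp.weight w e ≤ c + t := by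
  classical
  intro e he
  obtain ⟨u, hu, v, hv, rfl⟩ := Finset.mem_add.mp (MvPolynomial.support_mul a b he)
  rw [map_add]
  exact add_le_add (ha u hu) (hb v hv)


lemma I_hom {m : ℕ} {g : Fin m → MvPolynomial (Fin n) R}
    (hg' : ∀ i, ∃ c, (g i).IsWeightedHomogeneous w c) :
    ∀ p ∈ Ideal.span (Set.range g), ∀ d,
      weightedHomogeneousComponent w d p ∈ Ideal.span (Set.range g) := by
  intro p hp d
  obtain ⟨a, rfl⟩ := Ideal.mem_span_range_iff_exists_fun.mp hp
  rw [map_sum]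
  apply Ideal.sum_mem
  intro i _
  obtain ⟨c, hc⟩ := hg' i
  rw [mul_comm, wHC_mul_left hc]
  exact Ideal.mul_mem_right _ _ (Ideal.subset_span (Set.mem_range_self i))

lemma core {m : ℕ} {g : Fin m → MvPolynomial (Fin n) R} {fm : MvPolynomial (Fin n) R}
    (hfm : Ideal.Quotient.mk (Ideal.span (Set.range g)) (topPart w fm) ∈
      nonZeroDivisors (MvPolynomial (Fin n) R ⧸ Ideal.span (Set.range g)))
    (Ihom : ∀ p ∈ Ideal.span (Set.range g), ∀ d,
      weightedHomogeneousComponent w d p ∈ Ideal.span (Set.range g)) :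
    ∀ (N : ℕ) (b : MvPolynomial (Fin n) R), b.support.card ≤ N → ∀ e : ℝ,
      (∀ d : ℝ, e < d → weightedHomogeneousComponent w d (b * fm) ∈ Ideal.span (Set.range g)) →
      weightedHomogeneousComponent w e (b * fm) ∈
        Ideal.span (Set.range g ∪ {topPart w fm}) := by
  classical
  set I := Ideal.span (Set.range g) with hI
  set K := Ideal.span (Set.range g ∪ {topPart w fm}) with hK
  have hIK : I ≤ K := Ideal.span_mono Set.subset_union_left
  intro N
  induction N with
  | zero =>
    intro b hb e _
    have : b = 0 := by
      rw [← MvPolynomial.support_eq_empty]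
      exact Finset.card_eq_zero.mp (Nat.le_zero.mp hb)
    rw [this, zero_mul, map_zero]
    exact K.zero_mem
  | succ N ih =>
    intro b hcard e hhi
    rcases eq_or_ne b 0 with rfl | hb
    · rw [zero_mul, map_zero]; exact K.zero_mem
    rcases eq_or_ne fm 0 with rfl | hfm0
    · rw [mul_zero, map_zero]; exact K.zero_mem
    obtain ⟨c, hbB, ⟨e0, he0s, he0w⟩, hbT⟩ := exists_top (w := w) hb
    obtain ⟨t, hfB, _, hfT⟩ := exists_top (w := w) hfm0
    rcases le_or_gt (c + t) e with hle | hlt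
    · rcases eq_or_lt_of_le hle with heq | hlt'
      · rw [← heq, wHC_top_mul hbB hfB, ← hfT]
        exact Ideal.mul_mem_left _ _
          (Ideal.subset_span (Set.mem_union_right _ (Set.mem_singleton _)))
      · rw [wHC_eq_zero_of_gt (mul_support_bound hbB hfB) hlt']
        exact K.zero_mem
    · have h1 : weightedHomogeneousComponent w (c + t) (b * fm) ∈ I := hhi _ hlt
      rw [wHC_top_mul hbB hfB] at h1
      have h2 : weightedHomogeneousComponent w c b ∈ I := by
        have hq : Ideal.Quotient.mk I (weightedHomogeneousComponent w c b) *
            Ideal.Quotient.mk I (topPart w fm) = 0 := by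
          rw [← map_mul, hfT, Ideal.Quotient.eq_zero_iff_mem]
          exact h1
        exact Ideal.Quotient.eq_zero_iff_mem.mp (hfm.2 _ hq)
      set b' := b - weightedHomogeneousComponent w c b with hb'
      have hcoeff : ∀ x, MvPolynomial.coeff x b' =
          if Finsupp.weight w x = c then 0 else MvPolynomial.coeff x b := by
        intro x
        rw [hb', MvPolynomial.coeff_sub, coeff_weightedHomogeneousComponent]
        split <;> ring
      have hsS : b'.support ⊆ b.support := by
        intro x hx
        rw [MvPolynomial.mem_support_iff] at hx ⊢
        intro hx0
        apply hx
        rw [hcoeff, hx0, ite_self]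
      have he0' : e0 ∉ b'.support := by
        rw [MvPolynomial.mem_support_iff, not_not, hcoeff, if_pos he0w]
      have hcard' : b'.support.card ≤ N := by
        have hss : b'.support ⊂ b.support :=
          ⟨hsS, fun h => he0' (h he0s)⟩
        have := Finset.card_lt_card hss
        omega
      have hIb : ∀ d, weightedHomogeneousComponent w d
          ((weightedHomogeneousComponent w c b) * fm) ∈ I :=
        fun d => Ihom _ (Ideal.mul_mem_right _ _ h2) d
      have hdecomp : b * fm = b' * fm + (weightedHomogeneousComponent w c b) * fm := by
        rw [hb']; ring
      have hhi' : ∀ d : ℝ, e < d → weightedHomogeneousComponent w d (b' * fm) ∈ I := by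
        intro d hd
        have : b' * fm = b * fm - (weightedHomogeneousComponent w c b) * fm := by
          rw [hb']; ring
        rw [this, map_sub]
        exact I.sub_mem (hhi d hd) (hIb d)
      rw [hdecomp, map_add]
      exact K.add_mem (ih b' hcard' e hhi') (hIK (hIb e))

end StmtSix

/-- **Top degree ideal** (Proposition `top degree ideal`).
Let `R` be a ring, `B = R[X_1,…,X_n]` with a weighted degree map `λ` and
`J = (f_1,…,f_m)` an ideal of `B`.  Suppose (i) `f̃_i = f_i` for `1 ≤ i ≤ m − 1` and
(ii) `f̃_m` is a non-zerodivisor in `B/(f_1,…,f_{m−1})`.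
Then `J̃ = (f_1,…,f_{m−1},f̃_m)`.  (Here the family `g = (f_1,…,f_{m-1})` lists the
first `m − 1` generators and `fm = f_m` is the last one.) -/
theorem stmt6 (R : Type*) [CommRing R] (n m : ℕ) (w : Fin n → ℝ)
    (g : Fin m → MvPolynomial (Fin n) R) (fm : MvPolynomial (Fin n) R)
    (hg : ∀ i, topPart w (g i) = g i)
    (hfm : Ideal.Quotient.mk (Ideal.span (Set.range g)) (topPart w fm) ∈
      nonZeroDivisors (MvPolynomial (Fin n) R ⧸ Ideal.span (Set.range g))) :
    topIdeal w (Ideal.span (Set.range g ∪ {fm}))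
      = Ideal.span (Set.range g ∪ {topPart w fm}) := by
  classical
  set I := Ideal.span (Set.range g) with hI
  set K := Ideal.span (Set.range g ∪ {topPart w fm}) with hK
  have hIK : I ≤ K := Ideal.span_mono Set.subset_union_left
  have hg' : ∀ i, ∃ c, MvPolynomial.IsWeightedHomogeneous w (g i) c :=
    fun i => StmtSix.topPart_hom (hg i)
  have Ihom := StmtSix.I_hom hg'
  apply le_antisymm
  · rw [topIdeal, Ideal.span_le]
    rintro q ⟨p, hp, rfl⟩
    rcases eq_or_ne p 0 with rfl | hp0
    · rw [StmtSix.topPart_zero]; exact K.zero_mem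
    obtain ⟨cp, hpB, _, hpT⟩ := StmtSix.exists_top (w := w) hp0
    rw [hpT]
    rw [SetLike.mem_coe, Set.union_singleton, Ideal.mem_span_insert] at hp
    obtain ⟨b, A, hA, rfl⟩ := hp
    have hbf : ∀ d : ℝ, cp < d →
        MvPolynomial.weightedHomogeneousComponent w d (b * fm) ∈ I := by
      intro d hd
      have h0 : MvPolynomial.weightedHomogeneousComponent w d (b * fm + A) = 0 :=
        StmtSix.wHC_eq_zero_of_gt hpB hd
      rw [map_add] at h0
      have h1 : MvPolynomial.weightedHomogeneousComponent w d (b * fm)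
          = -(MvPolynomial.weightedHomogeneousComponent w d A) :=
        eq_neg_of_add_eq_zero_left h0
      rw [h1]
      exact I.neg_mem (Ihom _ hA d)
    have hmain := StmtSix.core hfm Ihom b.support.card b le_rfl cp hbf
    rw [map_add]
    exact K.add_mem hmain (hIK (Ihom _ hA cp))
  · rw [Ideal.span_le]
    rintro q (⟨i, rfl⟩ | hq)
    · exact Ideal.subset_span
        ⟨g i, Ideal.subset_span (Set.mem_union_left _ (Set.mem_range_self i)), hg i⟩
    · rw [Set.mem_singleton_iff] at hq
      subst hq
      exact Ideal.subset_span
        ⟨fm, Ideal.subset_span (Set.mem_union_right _ (Set.mem_singleton _)), rfl⟩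
end

section
/- Let k be a field of characteristic zero, R = k[a,b] a polynomial ring in two variables, and B = R[X,Y,Z]. Let D be the R-derivation on B determined by DX = a, DY = b, DZ = bX − aY, which is a locally nilpotent nice R-derivation that is not fixed point free, with kernel A = R[u, v, w] where u = bX − aY, v = bZ − uY, w = aZ − uX. Then the plinth ideal I_1 of D equals the ideal (a, b, u)A of A. -/
namespace Wink16

open MvPolynomial

noncomputable section

variable (k : Type*) [Field k]

abbrev RR := MvPolynomial (Fin 2) k
abbrev BB := MvPolynomial (Fin 3) (RR k)
abbrev B4 := MvPolynomial (Fin 2) (RR k)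
abbrev P5 := MvPolynomial (Fin 3 ⊕ Fin 2) k

def aR : RR k := X 0
def bR : RR k := X 1
def u4 : B4 k := C (bR k) * X 0 - C (aR k) * X 1
def D4 (g : B4 k) : B4 k := C (aR k) * pderiv 0 g + C (bR k) * pderiv 1 g
def phiR : RR k →ₐ[k] B4 k := aeval ![(C (bR k))^2, C (aR k) * u4 k]
def phiv : Fin 3 → B4 k :=
  ![C (bR k) * X 1, C (bR k) * X 0^2 - C (aR k) * X 0 * X 1, -(u4 k^2 * X 1)]
def phi : BB k →ₐ[k] B4 k := aevalTower (phiR k) (phiv k)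

@[simp] lemma D4_X0 : D4 k (X 0) = C (aR k) := by
  simp [D4, pderiv_X_self, pderiv_X_of_ne]
@[simp] lemma D4_X1 : D4 k (X 1) = C (bR k) := by
  simp [D4, pderiv_X_self, pderiv_X_of_ne]
@[simp] lemma D4_C (r : RR k) : D4 k (C r) = 0 := by simp [D4]
lemma D4_add (g h : B4 k) : D4 k (g + h) = D4 k g + D4 k h := by
  simp [D4]; ring
lemma D4_mul (g h : B4 k) : D4 k (g * h) = g * D4 k h + h * D4 k g := by
  simp [D4, pderiv_mul]; ring
@[simp] lemma D4_u4 : D4 k (u4 k) = 0 := by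
  simp [u4, D4, pderiv_mul, pderiv_X_self, pderiv_X_of_ne]
  ring

@[simp] lemma phi_X0 : phi k (X 0) = C (bR k) * X 1 := by
  simp [phi, aevalTower_X, phiv]
@[simp] lemma phi_X1 : phi k (X 1) = C (bR k) * X 0^2 - C (aR k) * X 0 * X 1 := by
  simp [phi, aevalTower_X, phiv]
@[simp] lemma phi_X2 : phi k (X 2) = -(u4 k^2 * X 1) := by
  simp [phi, aevalTower_X, phiv]
@[simp] lemma phi_C (r : RR k) : phi k (C r) = phiR k r := aevalTower_C _ _ _
@[simp] lemma phiR_a : phiR k (aR k) = (C (bR k))^2 := by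
  simp [phiR, aR]
@[simp] lemma phiR_b : phiR k (bR k) = C (aR k) * u4 k := by
  simp [phiR, bR]

/-- coefficient of a partial derivative -/
lemma coeff_pderiv {σ R : Type*} [CommSemiring R] [DecidableEq σ] (i : σ) (m : σ →₀ ℕ)
    (p : MvPolynomial σ R) :
    coeff m (pderiv i p) = ((m i + 1 : ℕ) : R) * coeff (m + Finsupp.single i 1) p := by
  conv_lhs => rw [p.as_sum, map_sum, coeff_sum]
  rw [Finset.sum_eq_single (m + Finsupp.single i 1)]
  · rw [pderiv_monomial, add_tsub_cancel_right, coeff_monomial, if_pos rfl]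
    simp [mul_comm]
  · intro ν hν hne
    rw [pderiv_monomial, coeff_monomial]
    split_ifs with he
    · rcases Nat.eq_zero_or_pos (ν i) with h0 | hpos
      · simp [h0]
      · exfalso
        apply hne
        have hle : Finsupp.single i 1 ≤ ν := by
          rw [Finsupp.single_le_iff]; omega
        rw [← he, tsub_add_cancel_of_le hle]
    · rfl
  · intro h
    rw [notMem_support_iff.mp h]
    simp

/-- exponent vectors in `Fin 2 →₀ ℕ` -/
def sg (p q : ℕ) : Fin 2 →₀ ℕ := Finsupp.single 0 p + Finsupp.single 1 q

@[simp] lemma sg_apply0 (p q : ℕ) : sg p q 0 = p := by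
  simp [sg, Finsupp.single_apply]
@[simp] lemma sg_apply1 (p q : ℕ) : sg p q 1 = q := by
  simp [sg, Finsupp.single_apply]
lemma sg_add0 (p q : ℕ) : sg p q + Finsupp.single 0 1 = sg (p+1) q := by
  ext x; fin_cases x <;> simp [sg, Finsupp.single_apply]
lemma sg_add1 (p q : ℕ) : sg p q + Finsupp.single 1 1 = sg p (q+1) := by
  ext x; fin_cases x <;> simp [sg, Finsupp.single_apply]
lemma sg_sub0 (p q : ℕ) : sg (p+1) q - Finsupp.single 0 1 = sg p q := by
  ext x; fin_cases x <;> simp [sg, Finsupp.single_apply, Finsupp.tsub_apply]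
lemma sg_sub1 (p q : ℕ) : sg p (q+1) - Finsupp.single 1 1 = sg p q := by
  ext x; fin_cases x <;> simp [sg, Finsupp.single_apply, Finsupp.tsub_apply]
lemma sg_inj {p q p' q' : ℕ} (h : sg p q = sg p' q') : p = p' ∧ q = q' := by
  constructor
  · have := congrArg (fun f => f 0) h; simpa using this
  · have := congrArg (fun f => f 1) h; simpa using this

lemma mem_sg_support0 (p q : ℕ) : (0 : Fin 2) ∈ (sg p q).support ↔ p ≠ 0 := by
  simp [Finsupp.mem_support_iff]
lemma mem_sg_support1 (p q : ℕ) : (1 : Fin 2) ∈ (sg p q).support ↔ q ≠ 0 := by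
  simp [Finsupp.mem_support_iff]

/-- the certificate functional -/
def Lam (m : ℕ) (f : B4 k) : k :=
  ∑ i ∈ Finset.range (m+1),
    (-1:k)^i * (Nat.factorial i) * (Nat.factorial (m-i)) *
      coeff (sg i (m-i)) (coeff (sg (m-i) i) f)

lemma dc_D4 (g : B4 k) (i j : ℕ) :
    coeff (sg i j) (coeff (sg j i) (D4 k g))
      = (if i = 0 then 0 else (j+1) • coeff (sg (i-1) j) (coeff (sg (j+1) i) g))
        + (if j = 0 then 0 else (i+1) • coeff (sg i (j-1)) (coeff (sg j (i+1)) g)) := by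
  classical
  rw [D4, coeff_add, coeff_C_mul, coeff_C_mul, coeff_add]
  congr 1
  · rw [aR, coeff_X_mul']
    by_cases h0 : i = 0
    · subst h0
      rw [if_neg (by rw [mem_sg_support0]; simp), if_pos rfl]
    · obtain ⟨i', rfl⟩ := Nat.exists_eq_succ_of_ne_zero h0
      rw [if_pos (by rw [mem_sg_support0]; omega), if_neg (by omega), sg_sub0,
        coeff_pderiv, sg_apply0, sg_add0, ← nsmul_eq_mul, coeff_smul]
      simp
  · rw [bR, coeff_X_mul']
    by_cases h0 : j = 0
    · subst h0
      rw [if_neg (by rw [mem_sg_support1]; simp), if_pos rfl]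
    · obtain ⟨j', rfl⟩ := Nat.exists_eq_succ_of_ne_zero h0
      rw [if_pos (by rw [mem_sg_support1]; omega), if_neg (by omega), sg_sub1,
        coeff_pderiv, sg_apply1, sg_add1, ← nsmul_eq_mul, coeff_smul]
      simp

lemma lam_D4 (m : ℕ) (g : B4 k) : Lam k m (D4 k g) = 0 := by
  unfold Lam
  have hsplit :
      (∑ i ∈ Finset.range (m+1), (-1:k)^i * i.factorial * (m-i).factorial *
        coeff (sg i (m-i)) (coeff (sg (m-i) i) (D4 k g)))
      = (∑ i ∈ Finset.range (m+1), (-1:k)^i * i.factorial * (m-i).factorial *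
          (if i = 0 then 0 else (m-i+1) • coeff (sg (i-1) (m-i)) (coeff (sg (m-i+1) i) g)))
        + (∑ i ∈ Finset.range (m+1), (-1:k)^i * i.factorial * (m-i).factorial *
          (if m-i = 0 then 0 else (i+1) • coeff (sg i (m-i-1)) (coeff (sg (m-i) (i+1)) g))) := by
    rw [← Finset.sum_add_distrib]
    refine Finset.sum_congr rfl fun i _ => ?_
    rw [dc_D4, mul_add]
  rw [hsplit, Finset.sum_range_succ', Finset.sum_range_succ]
  rw [if_pos rfl, if_pos (Nat.sub_self m), mul_zero, mul_zero, add_zero, add_zero]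
  rw [← Finset.sum_add_distrib]
  refine Finset.sum_eq_zero fun i hi => ?_
  have him : i < m := Finset.mem_range.mp hi
  obtain ⟨n, hn⟩ : ∃ n, m - i = n + 1 := ⟨m - i - 1, by omega⟩
  rw [if_neg (Nat.succ_ne_zero i), if_neg (by omega),
    show m - (i+1) = n from by omega, show m - i - 1 = n from by omega, hn,
    show i + 1 - 1 = i from by omega]
  rw [nsmul_eq_mul, nsmul_eq_mul, Nat.factorial_succ (n), Nat.factorial_succ (i), pow_succ]
  push_cast
  ring

lemma sg_zero : sg 0 0 = (0 : Fin 2 →₀ ℕ) := by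
  ext x; fin_cases x <;> simp

lemma sg_eq_zero_iff (c d : ℕ) : sg c d = 0 ↔ c = 0 ∧ d = 0 := by
  constructor
  · intro h
    exact ⟨by simpa using congrArg (fun f => f 0) h, by simpa using congrArg (fun f => f 1) h⟩
  · rintro ⟨rfl, rfl⟩; exact sg_zero

lemma monomial_sg_expand (c d : ℕ) (s : k) :
    (monomial (sg c d) (monomial (sg d c) s) : B4 k)
      = C (C s) * C (aR k ^ d * bR k ^ c) * X 0 ^ c * X 1 ^ d := by
  have inner : (monomial (sg d c) s : RR k) = C s * aR k ^ d * bR k ^ c := by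
    rw [sg, monomial_add_single, ← C_mul_X_pow_eq_monomial, aR, bR]
  rw [sg, monomial_add_single, ← C_mul_X_pow_eq_monomial, inner]
  simp only [map_mul]
  ring

lemma u4_pow_eq (q : ℕ) :
    u4 k ^ q = ∑ j ∈ Finset.range (q+1),
      monomial (sg j (q-j)) (monomial (sg (q-j) j) ((-1:k)^(q-j) * (q.choose j : k))) := by
  have hu : u4 k = (C (bR k) * X 0) + (-(C (aR k) * X 1)) := by unfold u4; ring
  rw [hu, Commute.add_pow (Commute.all _ _)]
  refine Finset.sum_congr rfl fun j hj => ?_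
  rw [monomial_sg_expand,
    ← map_natCast (C : RR k →+* B4 k) (q.choose j),
    ← map_natCast (C : k →+* RR k) (q.choose j)]
  simp only [map_mul, map_pow, map_neg, map_one]
  ring

lemma coeff_u4_pow (q c d : ℕ) :
    coeff (sg c d) (u4 k ^ q)
      = if c + d = q then monomial (sg d c) ((-1:k)^d * (q.choose c : k)) else 0 := by
  classical
  rw [u4_pow_eq, coeff_sum]
  by_cases h : c + d = q
  · rw [if_pos h]
    rw [Finset.sum_eq_single c]
    · rw [coeff_monomial, if_pos (by rw [show q - c = d from by omega]), show q - c = d from by omega]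
    · intro j hj hne
      rw [coeff_monomial, if_neg]
      intro he
      exact hne (sg_inj he).1
    · intro hc
      exfalso; exact hc (Finset.mem_range.mpr (by omega))
  · rw [if_neg h]
    refine Finset.sum_eq_zero fun j hj => ?_
    rw [coeff_monomial, if_neg]
    intro he
    obtain ⟨h1, h2⟩ := sg_inj he
    rw [Finset.mem_range] at hj
    omega

lemma lam_u4_pow_ne (m q : ℕ) (h : q ≠ m) : Lam k m (u4 k ^ q) = 0 := by
  unfold Lam
  refine Finset.sum_eq_zero fun i hi => ?_
  rw [Finset.mem_range] at hi
  rw [coeff_u4_pow, if_neg (by omega)]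
  simp

lemma lam_u4_pow_self (m : ℕ) : Lam k m (u4 k ^ m) = ((m+1).factorial : k) := by
  unfold Lam
  have h1 : ∀ i ∈ Finset.range (m+1), (-1:k)^i * i.factorial * (m-i).factorial *
      coeff (sg i (m-i)) (coeff (sg (m-i) i) (u4 k ^ m)) = (m.factorial : k) := by
    intro i hi
    have him : i ≤ m := by rw [Finset.mem_range] at hi; omega
    rw [coeff_u4_pow, if_pos (by omega), coeff_monomial, if_pos rfl]
    have hcc : (m.choose (m-i)) * (m-i).factorial * (m-(m-i)).factorial = m.factorial :=
      Nat.choose_mul_factorial_mul_factorial (by omega)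
    rw [show m - (m-i) = i from by omega] at hcc
    have hs : (-1:k)^i * (-1:k)^i = 1 := by
      rw [← pow_add, ← two_mul, pow_mul]; norm_num
    calc (-1:k)^i * i.factorial * (m-i).factorial * ((-1)^i * (m.choose (m-i) : k))
        = ((-1:k)^i * (-1)^i) * (((i.factorial * (m-i).factorial * (m.choose (m-i)) : ℕ)) : k) := by
          push_cast; ring
      _ = (m.factorial : k) := by
          rw [hs, one_mul,
            show i.factorial * (m-i).factorial * m.choose (m-i) = m.factorial from by
              rw [← hcc]; ring]
  rw [Finset.sum_congr rfl h1, Finset.sum_const, Finset.card_range, nsmul_eq_mul,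
    Nat.factorial_succ]
  push_cast; ring

lemma lam_sum {ι : Type*} (m : ℕ) (s : Finset ι) (f : ι → B4 k) :
    Lam k m (∑ x ∈ s, f x) = ∑ x ∈ s, Lam k m (f x) := by
  unfold Lam
  rw [Finset.sum_comm]
  refine Finset.sum_congr rfl fun i _ => ?_
  rw [coeff_sum, coeff_sum, Finset.mul_sum]

lemma lam_CC_mul (m : ℕ) (c : k) (f : B4 k) :
    Lam k m (C (C c) * f) = c * Lam k m f := by
  unfold Lam
  rw [Finset.mul_sum]
  refine Finset.sum_congr rfl fun i _ => ?_
  rw [coeff_C_mul, coeff_C_mul]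
  ring

lemma D4_phiR (r : RR k) : D4 k (phiR k r) = 0 := by
  induction r using MvPolynomial.induction_on with
  | C c =>
    rw [phiR, aeval_C, IsScalarTower.algebraMap_apply k (RR k) (B4 k), algebraMap_eq, D4_C]
  | add p q hp hq => rw [map_add, D4_add, hp, hq, add_zero]
  | mul_X p i hp =>
    rw [map_mul, D4_mul, hp, mul_zero, add_zero]
    fin_cases i
    · have h0 : D4 k ((C (bR k))^2) = 0 := by rw [pow_two, D4_mul, D4_C]; simp
      simp [phiR, h0]
    · have h1 : D4 k (C (aR k) * u4 k) = 0 := by rw [D4_mul, D4_C, D4_u4]; simp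
      simp [phiR, h1]

lemma D4_neg (g : B4 k) : D4 k (-g) = -D4 k g := by
  simp [D4]; ring

@[simp] lemma phiR_X0 : phiR k (X 0 : RR k) = (C (bR k))^2 := by simp [phiR]
@[simp] lemma phiR_X1 : phiR k (X 1 : RR k) = C (aR k) * u4 k := by simp [phiR]

lemma D4_phi_X1 : D4 k (phi k (X 1)) = C (aR k) * u4 k := by
  rw [phi_X1, pow_two, D4]
  simp [pderiv_mul, pderiv_X_self, pderiv_X_of_ne, u4]
  ring

lemma D4_phi_X2 : D4 k (phi k (X 2)) = -(C (bR k) * u4 k ^ 2) := by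
  have hsq : D4 k (u4 k ^ 2) = 0 := by rw [pow_two, D4_mul, D4_u4]; simp
  rw [phi_X2, D4_neg, D4_mul, hsq, D4_X1]
  ring

section withD

lemma phi_u (a b : RR k) (ha : a = X 0) (hb : b = X 1) (u : BB k)
    (hu : u = algebraMap (RR k) (BB k) b * X 0 - algebraMap (RR k) (BB k) a * X 1) :
    phi k u = -(C (bR k) * u4 k ^ 2) := by
  subst hu ha hb
  rw [algebraMap_eq, map_sub, map_mul, map_mul, phi_C, phi_C, phi_X0, phi_X1,
    phiR_X0, phiR_X1]
  unfold u4 aR bR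
  ring

lemma phi_comm (D : Derivation (RR k) (BB k) (BB k)) (a b : RR k) (ha : a = X 0) (hb : b = X 1)
    (hDX : D (X 0) = algebraMap (RR k) (BB k) a)
    (hDY : D (X 1) = algebraMap (RR k) (BB k) b)
    (u : BB k)
    (hu : u = algebraMap (RR k) (BB k) b * X 0 - algebraMap (RR k) (BB k) a * X 1)
    (hDZ : D (X 2) = u) (p : BB k) :
    phi k (D p) = D4 k (phi k p) := by
  have key : ∀ i : Fin 3, phi k (D (X i)) = D4 k (phi k (X i)) := by
    intro i
    fin_cases i
    · change phi k (D (X 0)) = D4 k (phi k (X 0))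
      rw [hDX, algebraMap_eq, phi_C, ha, phiR_X0, phi_X0, D4_mul, D4_X1, D4_C]
      simp [pow_two]
    · change phi k (D (X 1)) = D4 k (phi k (X 1))
      rw [hDY, algebraMap_eq, phi_C, hb, phiR_X1, D4_phi_X1]
    · change phi k (D (X 2)) = D4 k (phi k (X 2))
      rw [hDZ, phi_u k a b ha hb u hu, D4_phi_X2]
  induction p using MvPolynomial.induction_on with
  | C r => simp [derivation_C, phi_C, D4_phiR]
  | add p q hp hq => simp [map_add, D4_add, hp, hq]
  | mul_X p i hp =>
    rw [Derivation.leibniz, smul_eq_mul, smul_eq_mul, map_add, map_mul, map_mul,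
      hp, key i, map_mul, D4_mul]

lemma phi_v (a b : RR k) (ha : a = X 0) (hb : b = X 1) (u v : BB k)
    (hu : u = algebraMap (RR k) (BB k) b * X 0 - algebraMap (RR k) (BB k) a * X 1)
    (hv : v = algebraMap (RR k) (BB k) b * X 2 - u * X 1) :
    phi k v = u4 k ^ 4 := by
  rw [hv, map_sub, map_mul, map_mul, algebraMap_eq, phi_C, hb, phiR_X1,
    phi_u k a b ha hb u hu, phi_X2, phi_X1]
  unfold u4 aR bR
  ring

end withD

def ee : P5 k ≃ₐ[k] BB k := sumAlgEquiv k (Fin 3) (Fin 2)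

def epsP : Derivation k (P5 k) (P5 k) :=
  mkDerivation k (Sum.elim (![X (Sum.inl 1), 0, 0] : Fin 3 → P5 k)
    (![X (Sum.inr 1), 0] : Fin 2 → P5 k))

def Ee : BB k → BB k := fun p => ee k (epsP k ((ee k).symm p))

@[simp] lemma ee_Xl (i : Fin 3) : ee k (X (Sum.inl i)) = X i := by
  show sumAlgEquiv k (Fin 3) (Fin 2) (X (Sum.inl i)) = X i
  exact sumAlgEquiv_X_inl _ _ _ _
@[simp] lemma ee_Xr (j : Fin 2) : ee k (X (Sum.inr j)) = C (X j) := by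
  show sumAlgEquiv k (Fin 3) (Fin 2) (X (Sum.inr j)) = C (X j)
  exact sumAlgEquiv_X_inr _ _ _ _
@[simp] lemma ee_symm_X (i : Fin 3) : (ee k).symm (X i) = X (Sum.inl i) := by
  rw [← ee_Xl]; exact (ee k).symm_apply_apply _
@[simp] lemma ee_symm_CX (j : Fin 2) : (ee k).symm (C (X j)) = X (Sum.inr j) := by
  rw [← ee_Xr]; exact (ee k).symm_apply_apply _

@[simp] lemma Ee_X0 : Ee k (X 0) = X 1 := by
  rw [Ee, ee_symm_X]
  rw [epsP, mkDerivation_X]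
  simp
@[simp] lemma Ee_X1 : Ee k (X 1) = 0 := by
  rw [Ee, ee_symm_X, epsP, mkDerivation_X]
  simp
@[simp] lemma Ee_X2 : Ee k (X 2) = 0 := by
  rw [Ee, ee_symm_X, epsP, mkDerivation_X]
  simp
@[simp] lemma Ee_Ca : Ee k (C (X 0)) = C (X 1) := by
  rw [Ee, ee_symm_CX, epsP, mkDerivation_X]
  simp
@[simp] lemma Ee_Cb : Ee k (C (X 1)) = 0 := by
  rw [Ee, ee_symm_CX, epsP, mkDerivation_X]
  simp
@[simp] lemma Ee_algebraMap (c : k) : Ee k (algebraMap k (BB k) c) = 0 := by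
  rw [Ee]
  have h1 : (ee k).symm (algebraMap k (BB k) c) = algebraMap k (P5 k) c :=
    (ee k).symm.commutes c
  rw [h1, Derivation.map_algebraMap]
  simp
@[simp] lemma Ee_zero : Ee k 0 = 0 := by
  rw [Ee]; simp
lemma Ee_add (p q : BB k) : Ee k (p + q) = Ee k p + Ee k q := by
  simp [Ee, map_add]
lemma Ee_mul (p q : BB k) : Ee k (p * q) = p * Ee k q + q * Ee k p := by
  rw [Ee, map_mul, Derivation.leibniz, smul_eq_mul, smul_eq_mul, map_add, map_mul, map_mul]
  simp only [AlgEquiv.apply_symm_apply]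
  rfl

lemma Ee_C (r : RR k) : ∃ r', Ee k (C r) = C r' := by
  induction r using MvPolynomial.induction_on with
  | C c =>
    refine ⟨0, ?_⟩
    have : (C (C c) : BB k) = algebraMap k (BB k) c := rfl
    rw [this, Ee_algebraMap, map_zero]
  | add p q hp hq =>
    obtain ⟨rp, hrp⟩ := hp
    obtain ⟨rq, hrq⟩ := hq
    exact ⟨rp + rq, by rw [map_add, Ee_add, hrp, hrq, map_add]⟩
  | mul_X r j hr =>
    obtain ⟨r', hr'⟩ := hr
    rw [map_mul, Ee_mul, hr']
    fin_cases j
    · refine ⟨r * X 1 + X 0 * r', ?_⟩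
      change C r * Ee k (C (X 0)) + C (X 0) * C r' = _
      rw [Ee_Ca, map_add, map_mul, map_mul]
    · refine ⟨X 1 * r', ?_⟩
      change C r * Ee k (C (X 1)) + C (X 1) * C r' = _
      rw [Ee_Cb, mul_zero, zero_add, map_mul]

lemma Ee_sub (p q : BB k) : Ee k (p - q) = Ee k p - Ee k q := by
  simp [Ee, map_sub]

section withD2

lemma Ee_u (a b : RR k) (ha : a = X 0) (hb : b = X 1) (u : BB k)
    (hu : u = algebraMap (RR k) (BB k) b * X 0 - algebraMap (RR k) (BB k) a * X 1) :
    Ee k u = 0 := by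
  rw [hu, ha, hb, algebraMap_eq, Ee_sub, Ee_mul, Ee_mul]
  rw [Ee_Ca, Ee_Cb, Ee_X0, Ee_X1]
  ring

lemma Ee_v (a b : RR k) (ha : a = X 0) (hb : b = X 1) (u v : BB k)
    (hu : u = algebraMap (RR k) (BB k) b * X 0 - algebraMap (RR k) (BB k) a * X 1)
    (hv : v = algebraMap (RR k) (BB k) b * X 2 - u * X 1) :
    Ee k v = 0 := by
  rw [hv, hb, algebraMap_eq, Ee_sub, Ee_mul, Ee_mul]
  rw [Ee_Cb, Ee_X1, Ee_X2, Ee_u k a b ha hb u hu]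
  ring

lemma Ee_w (a b : RR k) (ha : a = X 0) (hb : b = X 1) (u v w : BB k)
    (hu : u = algebraMap (RR k) (BB k) b * X 0 - algebraMap (RR k) (BB k) a * X 1)
    (hv : v = algebraMap (RR k) (BB k) b * X 2 - u * X 1)
    (hw : w = algebraMap (RR k) (BB k) a * X 2 - u * X 0) :
    Ee k w = v := by
  rw [hw, ha, algebraMap_eq, Ee_sub, Ee_mul, Ee_mul]
  rw [Ee_Ca, Ee_X0, Ee_X2, Ee_u k a b ha hb u hu]
  rw [hv, hb, algebraMap_eq]
  rw [hu, ha, hb, algebraMap_eq]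
  ring

lemma Ee_comm (a b : RR k) (ha : a = X 0) (hb : b = X 1)
    (D : Derivation (RR k) (BB k) (BB k))
    (hDX : D (X 0) = algebraMap (RR k) (BB k) a)
    (hDY : D (X 1) = algebraMap (RR k) (BB k) b)
    (u : BB k)
    (hu : u = algebraMap (RR k) (BB k) b * X 0 - algebraMap (RR k) (BB k) a * X 1)
    (hDZ : D (X 2) = u) (p : BB k) :
    Ee k (D p) = D (Ee k p) := by
  have key : ∀ i : Fin 3, Ee k (D (X i)) = D (Ee k (X i)) := by
    intro i
    fin_cases i
    · change Ee k (D (X 0)) = D (Ee k (X 0))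
      rw [hDX, ha, algebraMap_eq, Ee_Ca, Ee_X0, ← hb, ← algebraMap_eq, hDY]
    · change Ee k (D (X 1)) = D (Ee k (X 1))
      rw [hDY, hb, algebraMap_eq, Ee_Cb, Ee_X1, map_zero]
    · change Ee k (D (X 2)) = D (Ee k (X 2))
      rw [hDZ, Ee_u k a b ha hb u hu, Ee_X2, map_zero]
  induction p using MvPolynomial.induction_on with
  | C r =>
    rw [derivation_C, Ee_zero]
    obtain ⟨r', hr'⟩ := Ee_C k r
    rw [hr', derivation_C]
  | add p q hp hq => rw [map_add, Ee_add, Ee_add, map_add, hp, hq]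
  | mul_X p i hp =>
    rw [Derivation.leibniz, smul_eq_mul, smul_eq_mul, Ee_add, Ee_mul, Ee_mul, Ee_mul,
      map_add, Derivation.leibniz, Derivation.leibniz, smul_eq_mul, smul_eq_mul,
      smul_eq_mul, smul_eq_mul, hp, key i]
    ring

lemma Ee_range (a b : RR k) (ha : a = X 0) (hb : b = X 1)
    (D : Derivation (RR k) (BB k) (BB k))
    (hDX : D (X 0) = algebraMap (RR k) (BB k) a)
    (hDY : D (X 1) = algebraMap (RR k) (BB k) b)
    (u : BB k)
    (hu : u = algebraMap (RR k) (BB k) b * X 0 - algebraMap (RR k) (BB k) a * X 1)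
    (hDZ : D (X 2) = u) {q : BB k} (hq : q ∈ Set.range ⇑D) :
    Ee k q ∈ Set.range ⇑D := by
  obtain ⟨p, rfl⟩ := hq
  exact ⟨Ee k p, (Ee_comm k a b ha hb D hDX hDY u hu hDZ p).symm⟩

lemma Ee_aeval (v w : BB k) (hEv : Ee k v = 0) (hEw : Ee k w = v)
    (F : MvPolynomial (Fin 2) k) :
    Ee k (aeval ![v, w] F) = aeval ![v, w] (X 0 * pderiv 1 F) := by
  induction F using MvPolynomial.induction_on with
  | C c =>
    rw [aeval_C, Ee_algebraMap, pderiv_C, mul_zero, map_zero]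
  | add p q hp hq =>
    rw [map_add, Ee_add, hp, hq, map_add, mul_add, map_add]
  | mul_X p i hp =>
    have h0 : (![v, w] : Fin 2 → BB k) 0 = v := rfl
    have h1 : (![v, w] : Fin 2 → BB k) 1 = w := rfl
    fin_cases i <;> simp only [Fin.zero_eta, Fin.mk_one]
    · rw [map_mul, Ee_mul, hp, pderiv_mul,
        show (pderiv 1) (X (0:Fin 2) : MvPolynomial (Fin 2) k) = 0 from
          pderiv_X_of_ne (by decide),
        mul_zero, add_zero, aeval_X, h0, hEv, mul_zero, zero_add]
      simp only [map_mul, aeval_X, h0]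
      ring
    · rw [map_mul, Ee_mul, hp, pderiv_mul, pderiv_X_self, mul_one, aeval_X, h1, hEw]
      simp only [map_mul, map_add, mul_add, aeval_X, h0, h1]
      ring

end withD2

section charzero
variable [CharZero k]

lemma pderiv1_zero_support (F : MvPolynomial (Fin 2) k) (hF : pderiv 1 F = 0) :
    ∀ ν ∈ F.support, ν 1 = 0 := by
  intro ν hν
  by_contra hν1
  have hle : Finsupp.single (1 : Fin 2) 1 ≤ ν := by
    rw [Finsupp.single_le_iff]; omega
  have h1 : coeff (ν - Finsupp.single 1 1) (pderiv 1 F) = 0 := by rw [hF, coeff_zero]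
  rw [coeff_pderiv, tsub_add_cancel_of_le hle] at h1
  have h2 : ((ν - Finsupp.single 1 1 : Fin 2 →₀ ℕ) 1 + 1 : ℕ) = ν 1 := by
    rw [Finsupp.tsub_apply, Finsupp.single_apply, if_pos rfl]
    omega
  rw [h2] at h1
  rcases mul_eq_zero.mp h1 with h | h
  · exact hν1 (by exact_mod_cast h)
  · exact (mem_support_iff.mp hν) h

lemma pderiv1_zero_of_support (F : MvPolynomial (Fin 2) k)
    (hF : ∀ ν ∈ F.support, ν 1 = 0) : pderiv 1 F = 0 := by
  conv_lhs => rw [F.as_sum]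
  rw [map_sum]
  refine Finset.sum_eq_zero fun ν hν => ?_
  rw [pderiv_monomial, hF ν hν]
  simp

lemma deg_E_lt (F : MvPolynomial (Fin 2) k) (hne : pderiv 1 F ≠ 0) :
    degreeOf 1 (X 0 * pderiv 1 F) < degreeOf 1 F := by
  have hd0 : 0 < degreeOf 1 F := by
    rcases Nat.eq_zero_or_pos (degreeOf 1 F) with h | h
    · exfalso
      apply hne
      apply pderiv1_zero_of_support
      intro ν hν
      have h2 : ν 1 ≤ degreeOf 1 F := by
        rw [degreeOf_eq_sup]; exact Finset.le_sup (f := fun m => m 1) hν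
      omega
    · exact h
  have heq : degreeOf 1 (X 0 * pderiv 1 F) = degreeOf 1 (pderiv 1 F) := by
    rw [mul_comm]; exact degreeOf_mul_X_of_ne _ (by decide)
  rw [heq, degreeOf_lt_iff hd0]
  intro m hm
  have hc : coeff m (pderiv 1 F) ≠ 0 := mem_support_iff.mp hm
  rw [coeff_pderiv] at hc
  have hc2 : coeff (m + Finsupp.single 1 1) F ≠ 0 := fun h => hc (by rw [h, mul_zero])
  have hmem : m + Finsupp.single 1 1 ∈ F.support := mem_support_iff.mpr hc2
  have hb : (m + Finsupp.single 1 1 : Fin 2 →₀ ℕ) 1 ≤ degreeOf 1 F := by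
    rw [degreeOf_eq_sup]; exact Finset.le_sup (f := fun m => m 1) hmem
  rw [Finsupp.add_apply, Finsupp.single_apply, if_pos rfl] at hb
  omega

lemma base_vanish (a b : RR k) (ha : a = X 0) (hb : b = X 1) (u v : BB k)
    (hu : u = algebraMap (RR k) (BB k) b * X 0 - algebraMap (RR k) (BB k) a * X 1)
    (hv : v = algebraMap (RR k) (BB k) b * X 2 - u * X 1)
    (D : Derivation (RR k) (BB k) (BB k))
    (hDX : D (X 0) = algebraMap (RR k) (BB k) a)
    (hDY : D (X 1) = algebraMap (RR k) (BB k) b)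
    (hDZ : D (X 2) = u)
    (w : BB k)
    (F : MvPolynomial (Fin 2) k) (hF1 : pderiv 1 F = 0)
    (hF : aeval ![v, w] F ∈ Set.range ⇑D) : F = 0 := by
  by_contra hne
  have hsupp := pderiv1_zero_support k F hF1
  have hform : ∀ ν ∈ F.support, ν = Finsupp.single 0 (ν 0) := by
    intro ν hν
    ext x
    fin_cases x
    · simp [Finsupp.single_apply]
    · simp [Finsupp.single_apply, hsupp ν hν]
  have hnsupp : F.support.Nonempty := support_nonempty.mpr hne
  obtain ⟨ν0, hmem0, hsup⟩ := Finset.exists_mem_eq_sup F.support hnsupp (fun ν => ν 0)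
  set P := F.support.sup (fun ν => ν 0) with hP
  obtain ⟨g, hg⟩ := hF
  have hphig : phi k (aeval ![v, w] F) = D4 k (phi k g) := by
    rw [← hg]
    exact phi_comm k D a b ha hb hDX hDY u hu hDZ _
  have hexp : phi k (aeval ![v, w] F)
      = ∑ ν ∈ F.support, C (C (coeff ν F)) * u4 k ^ (4 * ν 0) := by
    conv_lhs => rw [F.as_sum]
    rw [map_sum, map_sum]
    refine Finset.sum_congr rfl fun ν hν => ?_
    rw [aeval_monomial]
    have hprod : (ν.prod fun i e => (![v, w] : Fin 2 → BB k) i ^ e) = v ^ ν 0 := by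
      rw [Finsupp.prod_fintype _ _ (fun i => pow_zero _), Fin.prod_univ_two, hsupp ν hν]
      change v ^ ν 0 * w ^ 0 = v ^ ν 0
      rw [pow_zero, mul_one]
    rw [hprod, map_mul, map_pow, phi_v k a b ha hb u v hu hv]
    have hcc : phi k (algebraMap k (BB k) (coeff ν F)) = C (C (coeff ν F)) := by
      rw [AlgHom.commutes, IsScalarTower.algebraMap_apply k (RR k) (B4 k),
        algebraMap_eq, algebraMap_eq]
    rw [hcc, ← pow_mul]
  have hlam : Lam k (4 * P) (phi k (aeval ![v, w] F)) = 0 := by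
    rw [hphig, lam_D4]
  rw [hexp, lam_sum] at hlam
  rw [Finset.sum_eq_single_of_mem ν0 hmem0 ?hother] at hlam
  case hother =>
    intro ν hν hνne
    rw [lam_CC_mul, lam_u4_pow_ne, mul_zero]
    intro hcontra
    apply hνne
    have h40 : ν 0 = P := by omega
    rw [hform ν hν, hform ν0 hmem0, h40, ← hsup]
  rw [lam_CC_mul, show ν0 0 = P from hsup.symm, lam_u4_pow_self] at hlam
  rcases mul_eq_zero.mp hlam with h | h
  · exact (mem_support_iff.mp hmem0) h
  · exact Nat.cast_ne_zero.mpr (Nat.factorial_ne_zero _) h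

lemma main_vanish (a b : RR k) (ha : a = X 0) (hb : b = X 1) (u v w : BB k)
    (hu : u = algebraMap (RR k) (BB k) b * X 0 - algebraMap (RR k) (BB k) a * X 1)
    (hv : v = algebraMap (RR k) (BB k) b * X 2 - u * X 1)
    (hw : w = algebraMap (RR k) (BB k) a * X 2 - u * X 0)
    (D : Derivation (RR k) (BB k) (BB k))
    (hDX : D (X 0) = algebraMap (RR k) (BB k) a)
    (hDY : D (X 1) = algebraMap (RR k) (BB k) b)
    (hDZ : D (X 2) = u)
    (F : MvPolynomial (Fin 2) k)
    (hF : aeval ![v, w] F ∈ Set.range ⇑D) : F = 0 := by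
  have hEv : Ee k v = 0 := Ee_v k a b ha hb u v hu hv
  have hEw : Ee k w = v := Ee_w k a b ha hb u v w hu hv hw
  suffices h : ∀ n (F : MvPolynomial (Fin 2) k), degreeOf 1 F ≤ n →
      aeval ![v, w] F ∈ Set.range ⇑D → F = 0 from
    h (degreeOf 1 F) F le_rfl hF
  intro n
  induction n with
  | zero =>
    intro F hdeg hF
    refine base_vanish k a b ha hb u v hu hv D hDX hDY hDZ w F ?_ hF
    apply pderiv1_zero_of_support
    intro ν hν
    have h2 : ν 1 ≤ degreeOf 1 F := by
      rw [degreeOf_eq_sup]; exact Finset.le_sup (f := fun m => m 1) hν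
    omega
  | succ n ih =>
    intro F hdeg hF
    by_cases hpd : pderiv 1 F = 0
    · exact base_vanish k a b ha hb u v hu hv D hDX hDY hDZ w F hpd hF
    · exfalso
      have hEG : aeval ![v, w] (X 0 * pderiv 1 F) ∈ Set.range ⇑D := by
        rw [← Ee_aeval k v w hEv hEw F]
        exact Ee_range k a b ha hb D hDX hDY u hu hDZ hF
      have hdegG : degreeOf 1 (X 0 * pderiv 1 F) ≤ n := by
        have := deg_E_lt k F hpd
        omega
      have hG0 := ih (X 0 * pderiv 1 F) hdegG hEG
      rcases mul_eq_zero.mp hG0 with h | h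
      · exact X_ne_zero _ h
      · exact hpd h

end charzero

lemma Rdecomp (r : RR k) : ∃ c s t, r = C c + X 0 * s + X 1 * t := by
  induction r using MvPolynomial.induction_on with
  | C c => exact ⟨c, 0, 0, by simp⟩
  | add p q hp hq =>
    obtain ⟨c1, s1, t1, h1⟩ := hp
    obtain ⟨c2, s2, t2, h2⟩ := hq
    exact ⟨c1 + c2, s1 + s2, t1 + t2, by rw [h1, h2, map_add]; ring⟩
  | mul_X p j hp =>
    fin_cases j
    · exact ⟨0, p, 0, by simp [mul_comm]⟩
    · exact ⟨0, 0, p, by simp [mul_comm]⟩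

lemma aeval_mem_adjoin (u v w : BB k) (F : MvPolynomial (Fin 2) k) :
    aeval ![v, w] F ∈ Algebra.adjoin (RR k) {u, v, w} := by
  induction F using MvPolynomial.induction_on with
  | C c =>
    rw [aeval_C, IsScalarTower.algebraMap_apply k (RR k) (BB k)]
    exact Subalgebra.algebraMap_mem _ _
  | add p q hp hq =>
    rw [map_add]; exact add_mem hp hq
  | mul_X p j hp =>
    rw [map_mul]
    refine mul_mem hp ?_
    rw [aeval_X]
    fin_cases j
    · exact Algebra.subset_adjoin (by simp)
    · exact Algebra.subset_adjoin (by simp)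

lemma decomp (a b : RR k) (ha : a = X 0) (hb : b = X 1) (u v w : BB k) {x : BB k}
    (hx : x ∈ Algebra.adjoin (RR k) {u, v, w}) :
    ∃ (F : MvPolynomial (Fin 2) k) (c₁ c₂ c₃ : BB k),
      c₁ ∈ Algebra.adjoin (RR k) {u, v, w} ∧ c₂ ∈ Algebra.adjoin (RR k) {u, v, w} ∧
      c₃ ∈ Algebra.adjoin (RR k) {u, v, w} ∧
      x = aeval ![v, w] F + algebraMap (RR k) (BB k) a * c₁
          + algebraMap (RR k) (BB k) b * c₂ + u * c₃ := by
  induction hx using Algebra.adjoin_induction with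
  | mem x hxs =>
    rcases hxs with rfl | rfl | rfl
    · refine ⟨0, 0, 0, 1, zero_mem _, zero_mem _, one_mem _, ?_⟩
      simp
    · refine ⟨X 0, 0, 0, 0, zero_mem _, zero_mem _, zero_mem _, ?_⟩
      rw [aeval_X]
      change x = x + _ * 0 + _ * 0 + _ * 0
      ring
    · refine ⟨X 1, 0, 0, 0, zero_mem _, zero_mem _, zero_mem _, ?_⟩
      rw [aeval_X]
      change x = x + _ * 0 + _ * 0 + _ * 0
      ring
  | algebraMap r =>
    obtain ⟨c, s, t, hr⟩ := Rdecomp k r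
    refine ⟨C c, algebraMap (RR k) (BB k) s, algebraMap (RR k) (BB k) t, 0,
      Subalgebra.algebraMap_mem _ _, Subalgebra.algebraMap_mem _ _, zero_mem _, ?_⟩
    rw [hr, map_add, map_add, map_mul, map_mul, aeval_C,
      IsScalarTower.algebraMap_apply k (RR k) (BB k), algebraMap_eq, algebraMap_eq, ha, hb]
    ring
  | add x y hxa hya hx hy =>
    obtain ⟨F, c₁, c₂, c₃, m1, m2, m3, he⟩ := hx
    obtain ⟨G, d₁, d₂, d₃, n1, n2, n3, hf⟩ := hy
    refine ⟨F + G, c₁ + d₁, c₂ + d₂, c₃ + d₃, add_mem m1 n1, add_mem m2 n2,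
      add_mem m3 n3, ?_⟩
    rw [he, hf, map_add]
    ring
  | mul x y hxa hya hx hy =>
    obtain ⟨F, c₁, c₂, c₃, m1, m2, m3, he⟩ := hx
    obtain ⟨G, d₁, d₂, d₃, n1, n2, n3, hf⟩ := hy
    have hE : aeval ![v, w] F ∈ Algebra.adjoin (RR k) {u, v, w} :=
      aeval_mem_adjoin k u v w F
    refine ⟨F * G, aeval ![v, w] F * d₁ + c₁ * y, aeval ![v, w] F * d₂ + c₂ * y,
      aeval ![v, w] F * d₃ + c₃ * y,
      add_mem (mul_mem hE n1) (mul_mem m1 hya),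
      add_mem (mul_mem hE n2) (mul_mem m2 hya),
      add_mem (mul_mem hE n3) (mul_mem m3 hya), ?_⟩
    rw [map_mul]
    calc x * y = x * y := rfl
    _ = (aeval ![v, w] F + algebraMap (RR k) (BB k) a * c₁
          + algebraMap (RR k) (BB k) b * c₂ + u * c₃) * y := by rw [← he]
    _ = aeval ![v, w] F * (aeval ![v, w] G + algebraMap (RR k) (BB k) a * d₁
          + algebraMap (RR k) (BB k) b * d₂ + u * d₃)
          + (algebraMap (RR k) (BB k) a * c₁ + algebraMap (RR k) (BB k) b * c₂
            + u * c₃) * y := by rw [← hf]; ring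
    _ = _ := by ring

end
end Wink16


set_option maxHeartbeats 1000000 in
/-- **Example `wink1`**: let `k` be a field of characteristic zero, `R = k[a,b]`,
`B = R[X,Y,Z]` and `D` the `R`-derivation with `DX = a`, `DY = b`, `DZ = bX − aY`; `D`
is a locally nilpotent nice `R`-derivation which is not fixed point free, with kernel
`A = R[u,v,w]` where `u = bX − aY`, `v = bZ − uY`, `w = aZ − uX`.  Then the plinth
ideal `I_1` of `D` equals the ideal `(a, b, u)A` of `A`. -/
theorem stmt16 (k : Type*) [Field k] [CharZero k]
    (D : Derivation (MvPolynomial (Fin 2) k)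
        (MvPolynomial (Fin 3) (MvPolynomial (Fin 2) k))
        (MvPolynomial (Fin 3) (MvPolynomial (Fin 2) k)))
    (a b : MvPolynomial (Fin 2) k)
    (ha : a = MvPolynomial.X 0) (hb : b = MvPolynomial.X 1)
    (hDX : D (MvPolynomial.X 0)
        = algebraMap _ (MvPolynomial (Fin 3) (MvPolynomial (Fin 2) k)) a)
    (hDY : D (MvPolynomial.X 1)
        = algebraMap _ (MvPolynomial (Fin 3) (MvPolynomial (Fin 2) k)) b)
    (u v w : MvPolynomial (Fin 3) (MvPolynomial (Fin 2) k))
    (hu : u = algebraMap _ _ b * MvPolynomial.X 0 - algebraMap _ _ a * MvPolynomial.X 1)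
    (hv : v = algebraMap _ _ b * MvPolynomial.X 2 - u * MvPolynomial.X 1)
    (hw : w = algebraMap _ _ a * MvPolynomial.X 2 - u * MvPolynomial.X 0)
    (hDZ : D (MvPolynomial.X 2) = u)
    (hlnd : ∀ q, ∃ M : ℕ, (⇑D)^[M] q = 0)
    (hnice : ∀ i : Fin 3, D (D (MvPolynomial.X i)) = 0)
    (hnfpf : Ideal.span (Set.range ⇑D) ≠ ⊤)
    (hker : ∀ q, D q = 0 ↔ q ∈ Algebra.adjoin (MvPolynomial (Fin 2) k) {u, v, w}) :
    {q : MvPolynomial (Fin 3) (MvPolynomial (Fin 2) k) | D q = 0 ∧ q ∈ Set.range ⇑D}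
      = {q : MvPolynomial (Fin 3) (MvPolynomial (Fin 2) k) |
          ∃ c₁ c₂ c₃, D c₁ = 0 ∧ D c₂ = 0 ∧ D c₃ = 0 ∧
            q = algebraMap _ _ a * c₁ + algebraMap _ _ b * c₂ + u * c₃} := by
  ext q
  simp only [Set.mem_setOf_eq]
  constructor
  · rintro ⟨hq0, hqr⟩
    have hqadj := (hker q).mp hq0
    obtain ⟨F, c₁, c₂, c₃, m1, m2, m3, he⟩ := Wink16.decomp k a b ha hb u v w hqadj
    have hD1 : D c₁ = 0 := (hker c₁).mpr m1
    have hD2 : D c₂ = 0 := (hker c₂).mpr m2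
    have hD3 : D c₃ = 0 := (hker c₃).mpr m3
    have h1 : algebraMap _ (MvPolynomial (Fin 3) (MvPolynomial (Fin 2) k)) a * c₁
        ∈ Set.range ⇑D :=
      ⟨MvPolynomial.X 0 * c₁, by
        rw [Derivation.leibniz, hD1, hDX, smul_zero, zero_add, smul_eq_mul]; ring⟩
    have h2 : algebraMap _ (MvPolynomial (Fin 3) (MvPolynomial (Fin 2) k)) b * c₂
        ∈ Set.range ⇑D :=
      ⟨MvPolynomial.X 1 * c₂, by
        rw [Derivation.leibniz, hD2, hDY, smul_zero, zero_add, smul_eq_mul]; ring⟩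
    have h3 : u * c₃ ∈ Set.range ⇑D :=
      ⟨MvPolynomial.X 2 * c₃, by
        rw [Derivation.leibniz, hD3, hDZ, smul_zero, zero_add, smul_eq_mul]; ring⟩
    have hFrange : MvPolynomial.aeval ![v, w] F ∈ Set.range ⇑D := by
      have heq2 : MvPolynomial.aeval ![v, w] F
          = q - (algebraMap _ _ a * c₁ + algebraMap _ _ b * c₂ + u * c₃) := by
        rw [he]; ring
      rw [heq2]
      obtain ⟨p0, hp0⟩ := hqr
      obtain ⟨p1, hp1⟩ := h1
      obtain ⟨p2, hp2⟩ := h2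
      obtain ⟨p3, hp3⟩ := h3
      exact ⟨p0 - (p1 + p2 + p3), by
        rw [map_sub, map_add, map_add, hp0, hp1, hp2, hp3]⟩
    have hF0 := Wink16.main_vanish k a b ha hb u v w hu hv hw D hDX hDY hDZ F hFrange
    refine ⟨c₁, c₂, c₃, hD1, hD2, hD3, ?_⟩
    rw [he, hF0, map_zero, zero_add]
  · rintro ⟨c₁, c₂, c₃, hD1, hD2, hD3, rfl⟩
    constructor
    · have hDu : D u = 0 := by
        rw [hu, map_sub, Derivation.leibniz, Derivation.leibniz, hDX, hDY,
          Derivation.map_algebraMap, Derivation.map_algebraMap]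
        simp only [smul_zero, smul_eq_mul, zero_add, add_zero]
        ring
      have hkill : ∀ (r : MvPolynomial (Fin 2) k)
          (c : MvPolynomial (Fin 3) (MvPolynomial (Fin 2) k)), D c = 0 →
          D (algebraMap (MvPolynomial (Fin 2) k)
              (MvPolynomial (Fin 3) (MvPolynomial (Fin 2) k)) r * c) = 0 := by
        intro r c hc
        rw [Derivation.leibniz, hc, Derivation.map_algebraMap]
        simp
      rw [map_add, map_add, hkill a c₁ hD1, hkill b c₂ hD2, Derivation.leibniz, hD3, hDu]
      simp
    · refine ⟨MvPolynomial.X 0 * c₁ + MvPolynomial.X 1 * c₂ + MvPolynomial.X 2 * c₃, ?_⟩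
      rw [map_add, map_add, Derivation.leibniz, Derivation.leibniz, Derivation.leibniz,
        hD1, hD2, hD3, hDX, hDY, hDZ]
      simp only [smul_zero, zero_add, smul_eq_mul]
      ring
end

section
/- Let k be a field of characteristic zero, R = k[t] a polynomial ring in one variable, and B = R[X_1,X_2]. Let D be the R-derivation on B determined by DX_1 = t(1 − t) and DX_2 = −tX_1 + 1 − t, which is an irreducible quasi-nice locally nilpotent R-derivation with Ker(D) = R[F], where F = t(1 − t)X_2 + (t/2)X_1² − X_1 + tX_1. Then the plinth ideal I_1 of D equals (1 − t)·Ker(D); in particular, I_1 ≠ t(1 − t)·Ker(D) (indeed D((1/2)X_1² + (1 − t)X_2) = (1 − t)²). -/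
noncomputable section
namespace Stmt18Aux

set_option linter.unusedSectionVars false
set_option maxSynthPendingDepth 3

variable (k : Type*) [Field k] [CharZero k]



-- aux lemma 1
lemma comp_half_sq {k : Type*} [Field k] [CharZero k] (q : Polynomial k)
    (h : q.comp (Polynomial.C (2⁻¹:k) * Polynomial.X ^ 2) = 0) : q = 0 := by
  rcases Polynomial.comp_eq_zero_iff.mp h with h0 | ⟨_, hc⟩
  · exact h0
  · exfalso
    have h2 := congrArg (fun p => Polynomial.coeff p 2) hc
    simp [Polynomial.coeff_C, Polynomial.coeff_C_mul] at h2

-- aux lemma 2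
lemma even_odd {k : Type*} [Field k] [CharZero k] (c q : Polynomial k)
    (h : c.comp (Polynomial.C (2⁻¹:k) * Polynomial.X ^ 2)
      + q.comp (Polynomial.C (2⁻¹:k) * Polynomial.X ^ 2)
        * (Polynomial.C (2⁻¹:k) * Polynomial.X ^ 2 + Polynomial.X) = 0) :
    c = 0 ∧ q = 0 := by
  have h2 := congrArg (fun p => p.comp (-Polynomial.X : Polynomial k)) h
  simp only [Polynomial.add_comp, Polynomial.mul_comp, Polynomial.comp_assoc,
    Polynomial.X_comp, Polynomial.zero_comp, Polynomial.C_comp, Polynomial.pow_comp,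
    neg_sq] at h2
  have h3 : q.comp (Polynomial.C (2⁻¹:k) * Polynomial.X ^ 2) * (2 * Polynomial.X) = 0 := by
    linear_combination h - h2
  have h4 : q.comp (Polynomial.C (2⁻¹:k) * Polynomial.X ^ 2) = 0 := by
    rcases mul_eq_zero.mp h3 with h' | h'
    · exact h'
    · exact absurd h' (by simp [Polynomial.X_ne_zero])
  have hq : q = 0 := comp_half_sq q h4
  refine ⟨?_, hq⟩
  apply comp_half_sq
  linear_combination h - (Polynomial.C (2⁻¹:k) * Polynomial.X ^ 2 + Polynomial.X) * h4

-- aux 3 : divisibility from vanishing at 1, Polynomial version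
lemma dvd_of_map_eval_one {k : Type*} [Field k]
    (P : Polynomial (Polynomial k)) (h : P.map (Polynomial.evalRingHom (1:k)) = 0) :
    ∃ Q, P = Polynomial.C (1 - Polynomial.X) * Q := by
  have : Polynomial.C (1 - Polynomial.X : Polynomial k) ∣ P := by
    rw [Polynomial.C_dvd_iff_dvd_coeff]
    intro n
    have h1 : Polynomial.eval (1:k) (P.coeff n) = 0 := by
      have := congrArg (fun p => Polynomial.coeff p n) h
      simpa [Polynomial.coeff_map] using this
    rcases Polynomial.dvd_iff_isRoot.mpr h1 with ⟨d, hd⟩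
    exact ⟨-d, by rw [hd, Polynomial.C_1]; ring⟩
  exact this

-- aux 4 : MvPolynomial version
lemma mv_dvd_of_map_eval_one {k : Type*} [Field k]
    (b : MvPolynomial (Fin 2) (Polynomial k))
    (h : MvPolynomial.map (Polynomial.evalRingHom (1:k)) b = 0) :
    ∃ b', b = MvPolynomial.C (1 - Polynomial.X) * b' := by
  have : MvPolynomial.C (1 - Polynomial.X : Polynomial k) ∣ b := by
    rw [MvPolynomial.C_dvd_iff_dvd_coeff]
    intro m
    have h1 : Polynomial.eval (1:k) (MvPolynomial.coeff m b) = 0 := by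
      have := congrArg (fun p => MvPolynomial.coeff m p) h
      simpa [MvPolynomial.coeff_map] using this
    rcases Polynomial.dvd_iff_isRoot.mpr h1 with ⟨d, hd⟩
    exact ⟨-d, by rw [hd, Polynomial.C_1]; ring⟩
  exact this


/-- `s = ½X₀² + X₀ + (1-t)X₁`, a local slice: `D s = 1 - t`. -/
def sB : MvPolynomial (Fin 2) (Polynomial k) :=
  algebraMap (Polynomial k) _ (Polynomial.C (2⁻¹:k)) * MvPolynomial.X 0 ^ 2
    + MvPolynomial.X 0
    + algebraMap (Polynomial k) _ (1 - Polynomial.X) * MvPolynomial.X 1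

/-- `F`, the kernel generator. -/
def FB : MvPolynomial (Fin 2) (Polynomial k) :=
  algebraMap (Polynomial k) _ (Polynomial.X * (1 - Polynomial.X)) * MvPolynomial.X 1
    + algebraMap (Polynomial k) (MvPolynomial (Fin 2) (Polynomial k))
        (Polynomial.C ((2 : k)⁻¹) * Polynomial.X) * MvPolynomial.X 0 ^ 2
    - MvPolynomial.X 0 + algebraMap (Polynomial k) _ Polynomial.X * MvPolynomial.X 0

def psi : Polynomial (Polynomial k) →+* MvPolynomial (Fin 2) (Polynomial k) :=
  (Polynomial.aeval (FB k)).toRingHom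

def phi (p : Polynomial (Polynomial (Polynomial k))) : MvPolynomial (Fin 2) (Polynomial k) :=
  Polynomial.eval₂ (psi k) (sB k) p

lemma psi_C (r : Polynomial k) : psi k (Polynomial.C r) = algebraMap _ _ r := by
  simp [psi]

lemma psi_X : psi k Polynomial.X = FB k := by simp [psi]

def p0 : Polynomial (Polynomial (Polynomial k)) :=
  Polynomial.C (Polynomial.C (Polynomial.X : Polynomial k)) * Polynomial.X
    - Polynomial.C (Polynomial.X : Polynomial (Polynomial k))

def p1 : Polynomial (Polynomial (Polynomial k)) :=
  Polynomial.X - Polynomial.C (Polynomial.C (Polynomial.C (2⁻¹:k))) * (p0 k) ^ 2 - p0 k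

lemma phi_p0 : phi k (p0 k) = MvPolynomial.X 0 := by
  simp only [phi, p0, Polynomial.eval₂_sub, Polynomial.eval₂_mul, Polynomial.eval₂_C,
    Polynomial.eval₂_X, psi_C, psi_X, sB, FB]
  simp only [map_mul, map_sub, map_add, map_one]
  ring

lemma phi_p1 : phi k (p1 k) = algebraMap (Polynomial k) _ (1 - Polynomial.X) * MvPolynomial.X 1 := by
  have h0 := phi_p0 k
  simp only [phi, p1, Polynomial.eval₂_sub, Polynomial.eval₂_mul, Polynomial.eval₂_pow,
    Polynomial.eval₂_C, Polynomial.eval₂_X, psi_C] at h0 ⊢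
  rw [h0, sB]
  ring

lemma phi_exists (b : MvPolynomial (Fin 2) (Polynomial k)) :
    ∃ (n : ℕ) (p : Polynomial (Polynomial (Polynomial k))),
      phi k p = (algebraMap (Polynomial k) _ (1 - Polynomial.X)) ^ n * b := by
  induction b using MvPolynomial.induction_on with
  | C r =>
    exact ⟨0, Polynomial.C (Polynomial.C r), by
      simp [phi, Polynomial.eval₂_C, psi_C, MvPolynomial.algebraMap_eq]⟩
  | add p q hp hq =>
    obtain ⟨n, pp, hpp⟩ := hp
    obtain ⟨m, qq, hqq⟩ := hq
    refine ⟨n + m,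
      (Polynomial.C (Polynomial.C (1 - Polynomial.X : Polynomial k))) ^ m * pp
        + (Polynomial.C (Polynomial.C (1 - Polynomial.X : Polynomial k))) ^ n * qq, ?_⟩
    simp only [phi, Polynomial.eval₂_add, Polynomial.eval₂_mul, Polynomial.eval₂_pow,
      Polynomial.eval₂_C, psi_C] at hpp hqq ⊢
    rw [hpp, hqq, pow_add]
    ring
  | mul_X p i hp =>
    obtain ⟨n, pp, hpp⟩ := hp
    fin_cases i
    · refine ⟨n, pp * p0 k, ?_⟩
      simp only [phi, Polynomial.eval₂_mul] at hpp ⊢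
      rw [hpp]
      have := phi_p0 k
      simp only [phi] at this
      rw [this]
      simp only [Fin.mk_zero, Fin.mk_one, Fin.isValue]
      ring
    · refine ⟨n + 1, pp * p1 k, ?_⟩
      simp only [phi, Polynomial.eval₂_mul] at hpp ⊢
      rw [hpp]
      have := phi_p1 k
      simp only [phi] at this
      rw [this, pow_succ]
      simp only [Fin.mk_zero, Fin.mk_one, Fin.isValue]
      ring




abbrev K := RatFunc k
abbrev T' := Polynomial (Polynomial (K k))
abbrev aK : Polynomial k →+* K k := algebraMap (Polynomial k) (K k)

def E0 : T' k :=
  Polynomial.C (Polynomial.C (aK k Polynomial.X)) * Polynomial.X - Polynomial.C Polynomial.X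

def E1 : T' k :=
  Polynomial.C (Polynomial.C ((aK k (1 - Polynomial.X))⁻¹))
    * (Polynomial.X - Polynomial.C (Polynomial.C (aK k (Polynomial.C (2⁻¹:k)))) * (E0 k) ^ 2
        - E0 k)

def Xi : MvPolynomial (Fin 2) (Polynomial k) →ₐ[Polynomial k] T' k :=
  MvPolynomial.aeval ![E0 k, E1 k]

lemma Xi_alg (r : Polynomial k) :
    Xi k (algebraMap (Polynomial k) _ r) = Polynomial.C (Polynomial.C (aK k r)) := by
  rw [AlgHom.commutes]
  rw [show (algebraMap (Polynomial k) (T' k)) r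
      = Polynomial.C (algebraMap (Polynomial k) (Polynomial (K k)) r) from
    Polynomial.algebraMap_apply r, Polynomial.algebraMap_apply]

lemma Xi_X0 : Xi k (MvPolynomial.X 0) = E0 k := by simp [Xi]
lemma Xi_X1 : Xi k (MvPolynomial.X 1) = E1 k := by simp [Xi]

lemma wK_ne : aK k (1 - Polynomial.X) ≠ 0 := by
  rw [map_ne_zero_iff _ (IsFractionRing.injective (Polynomial k) (K k))]
  intro h
  have := congrArg (Polynomial.eval (0:k)) h
  simp at this

lemma key_cancel :
    (Polynomial.C (Polynomial.C (aK k (1 - Polynomial.X))) : T' k)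
      * Polynomial.C (Polynomial.C ((aK k (1 - Polynomial.X))⁻¹)) = 1 := by
  rw [← map_mul, ← map_mul, mul_inv_cancel₀ (wK_ne k), map_one, map_one]

lemma Xi_FB : Xi k (FB k) = Polynomial.C Polynomial.X := by
  have hc := key_cancel k
  simp only [FB, map_add, map_sub, map_mul, map_pow, Xi_alg, Xi_X0, Xi_X1]
  simp only [map_mul, map_sub, map_one] at hc ⊢
  rw [E1]
  simp only [E0, map_mul, map_sub, map_one]
  linear_combination (Polynomial.C (Polynomial.C (aK k Polynomial.X))
    * (Polynomial.X - Polynomial.C (Polynomial.C (aK k (Polynomial.C (2⁻¹:k)))) * (Polynomial.C (Polynomial.C (aK k Polynomial.X)) * Polynomial.X - Polynomial.C Polynomial.X) ^ 2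
        - (Polynomial.C (Polynomial.C (aK k Polynomial.X)) * Polynomial.X - Polynomial.C Polynomial.X))) * hc

lemma Xi_sB : Xi k (sB k) = Polynomial.X := by
  have hc := key_cancel k
  simp only [sB, map_add, map_sub, map_mul, map_pow, Xi_alg, Xi_X0, Xi_X1]
  simp only [map_mul, map_sub, map_one] at hc ⊢
  rw [E1]
  simp only [E0, map_mul, map_sub, map_one]
  linear_combination (Polynomial.X
      - Polynomial.C (Polynomial.C (aK k (Polynomial.C (2⁻¹:k)))) * (Polynomial.C (Polynomial.C (aK k Polynomial.X)) * Polynomial.X - Polynomial.C Polynomial.X) ^ 2 - (Polynomial.C (Polynomial.C (aK k Polynomial.X)) * Polynomial.X - Polynomial.C Polynomial.X)) * hc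

lemma Xi_psi (a : Polynomial (Polynomial k)) :
    Xi k (psi k a) = Polynomial.C (a.map (aK k)) := by
  induction a using Polynomial.induction_on' with
  | add p q hp hq => simp only [map_add, Polynomial.map_add, hp, hq]
  | monomial n r =>
    have : psi k (Polynomial.monomial n r)
        = algebraMap (Polynomial k) _ r * (FB k) ^ n := by
      simp [psi, Polynomial.aeval_monomial]
    rw [this, map_mul, map_pow, Xi_alg, Xi_FB, Polynomial.map_monomial]
    rw [← Polynomial.C_mul_X_pow_eq_monomial, ← map_pow, ← map_mul]

lemma Xi_phi (p : Polynomial (Polynomial (Polynomial k))) :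
    Xi k (phi k p) = p.map (Polynomial.mapRingHom (aK k)) := by
  induction p using Polynomial.induction_on' with
  | add p q hp hq => simp only [phi, Polynomial.eval₂_add, map_add, Polynomial.map_add] at hp hq ⊢
                     rw [hp, hq]
  | monomial n a =>
    simp only [phi, Polynomial.eval₂_monomial, map_mul, map_pow, Xi_psi, Xi_sB,
      Polynomial.map_monomial, Polynomial.coe_mapRingHom]
    rw [← Polynomial.C_mul_X_pow_eq_monomial]

lemma phi_inj (p q : Polynomial (Polynomial (Polynomial k))) (h : phi k p = phi k q) :
    p = q := by
  have h2 := congrArg (Xi k) h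
  rw [Xi_phi, Xi_phi] at h2
  exact Polynomial.map_injective _
    (Polynomial.map_injective _ (IsFractionRing.injective (Polynomial k) (K k))) h2


def rho : MvPolynomial (Fin 2) (Polynomial k) →+* MvPolynomial (Fin 2) k :=
  MvPolynomial.map (Polynomial.evalRingHom (1:k))

def ee : MvPolynomial (Fin 2) k →ₐ[k] Polynomial k :=
  MvPolynomial.aeval ![Polynomial.X, 0]

def eta : MvPolynomial (Fin 2) (Polynomial k) →+* Polynomial k :=
  (ee k).toRingHom.comp (rho k)

lemma eta_alg (r : Polynomial k) :
    eta k (algebraMap (Polynomial k) _ r) = Polynomial.C (Polynomial.eval 1 r) := by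
  simp [eta, rho, ee, MvPolynomial.algebraMap_eq, MvPolynomial.map_C]

lemma eta_X0 : eta k (MvPolynomial.X 0) = Polynomial.X := by simp [eta, rho, ee]

lemma eta_X1 : eta k (MvPolynomial.X 1) = 0 := by simp [eta, rho, ee]

lemma eta_w : eta k (algebraMap (Polynomial k) _ (1 - Polynomial.X)) = 0 := by
  rw [eta_alg]; simp

lemma eta_FB : eta k (FB k) = Polynomial.C (2⁻¹:k) * Polynomial.X ^ 2 := by
  simp only [FB, map_add, map_sub, map_mul, map_pow, eta_alg, eta_X0, eta_X1]
  simp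

lemma eta_sB : eta k (sB k) = Polynomial.C (2⁻¹:k) * Polynomial.X ^ 2 + Polynomial.X := by
  simp only [sB, map_add, map_sub, map_mul, map_pow, eta_alg, eta_X0, eta_X1]
  simp

lemma eta_psi (a : Polynomial (Polynomial k)) :
    eta k (psi k a)
      = (a.map (Polynomial.evalRingHom (1:k))).comp (Polynomial.C (2⁻¹:k) * Polynomial.X ^ 2) := by
  induction a using Polynomial.induction_on' with
  | add p q hp hq => simp only [map_add, Polynomial.map_add, Polynomial.add_comp, hp, hq]
  | monomial n r =>
    have h1 : psi k (Polynomial.monomial n r)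
        = algebraMap (Polynomial k) _ r * (FB k) ^ n := by
      simp [psi, Polynomial.aeval_monomial]
    rw [h1, map_mul, map_pow, eta_alg, eta_FB, Polynomial.map_monomial,
      ← Polynomial.C_mul_X_pow_eq_monomial, Polynomial.mul_comp, Polynomial.C_comp,
      Polynomial.pow_comp, Polynomial.X_comp]
    simp [Polynomial.coe_evalRingHom]

lemma half_two :
    (algebraMap (Polynomial k) (MvPolynomial (Fin 2) (Polynomial k))) (Polynomial.C (2⁻¹:k)) * 2
      = 1 := by
  rw [show ((2:MvPolynomial (Fin 2) (Polynomial k)))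
      = algebraMap (Polynomial k) _ (2:Polynomial k) from (map_ofNat _ 2).symm,
    ← map_mul,
    show (Polynomial.C (2⁻¹:k) * 2 : Polynomial k) = 1 by
      rw [show (2:Polynomial k) = Polynomial.C (2:k) from (map_ofNat Polynomial.C 2).symm,
        ← Polynomial.C_mul]
      norm_num,
    map_one]

variable {k}
variable (D : Derivation (Polynomial k) (MvPolynomial (Fin 2) (Polynomial k))
  (MvPolynomial (Fin 2) (Polynomial k)))

lemma D_alg_mul (r : Polynomial k) (x : MvPolynomial (Fin 2) (Polynomial k)) :
    D (algebraMap (Polynomial k) _ r * x) = algebraMap (Polynomial k) _ r * D x := by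
  rw [← Algebra.smul_def, D.map_smul, Algebra.smul_def]

lemma D_sB
    (hDX1 : D (MvPolynomial.X 0)
      = algebraMap (Polynomial k) _ (Polynomial.X * (1 - Polynomial.X)))
    (hDX2 : D (MvPolynomial.X 1)
      = -(algebraMap (Polynomial k) _ Polynomial.X) * MvPolynomial.X 0
          + algebraMap (Polynomial k) _ (1 - Polynomial.X)) :
    D (sB k) = algebraMap (Polynomial k) _ (1 - Polynomial.X) := by
  have h2 := half_two k
  simp only [sB, map_add, D_alg_mul, pow_two, Derivation.leibniz, hDX1, hDX2, smul_eq_mul,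
    Derivation.map_algebraMap, Derivation.map_one_eq_zero, mul_zero, zero_mul, sub_zero,
    add_zero, zero_add]
  simp only [map_mul, map_sub, map_one] at h2 ⊢
  linear_combination (MvPolynomial.X 0
      * algebraMap (Polynomial k) (MvPolynomial (Fin 2) (Polynomial k)) Polynomial.X
      * (1 - algebraMap (Polynomial k) (MvPolynomial (Fin 2) (Polynomial k)) Polynomial.X)) * h2

lemma D_phi (hpsi0 : ∀ q, D (psi k q) = 0)
    (hDs : D (sB k) = algebraMap (Polynomial k) _ (1 - Polynomial.X)) :
    ∀ p, D (phi k p)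
      = algebraMap (Polynomial k) _ (1 - Polynomial.X) * phi k (Polynomial.derivative p) := by
  intro p
  induction p using Polynomial.induction_on' with
  | add p q hp hq =>
    simp only [phi, Polynomial.eval₂_add, map_add, Polynomial.derivative_add, hp, hq] at *
    ring
  | monomial n a =>
    simp only [phi, Polynomial.eval₂_monomial, Polynomial.derivative_monomial]
    rw [Derivation.leibniz, hpsi0, Derivation.leibniz_pow, hDs]
    simp only [smul_eq_mul, smul_zero, map_mul, map_natCast, mul_zero, add_zero, nsmul_eq_mul]
    ring

lemma w_ne_zero : (1 - Polynomial.X : Polynomial k) ≠ 0 := by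
  intro h
  have := congrArg (Polynomial.eval (0:k)) h
  simp at this

lemma aBw_ne_zero :
    (algebraMap (Polynomial k) (MvPolynomial (Fin 2) (Polynomial k))) (1 - Polynomial.X) ≠ 0 := by
  rw [MvPolynomial.algebraMap_eq]
  intro h
  exact w_ne_zero (k := k)
    (MvPolynomial.C_injective (Fin 2) (Polynomial k) (by rw [h, map_zero]))

lemma IND (hpsi0 : ∀ q, D (psi k q) = 0)
    (hDs : D (sB k) = algebraMap (Polynomial k) _ (1 - Polynomial.X)) :
    ∀ (n : ℕ) (b : MvPolynomial (Fin 2) (Polynomial k))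
      (p : Polynomial (Polynomial (Polynomial k))) (P : Polynomial (Polynomial k)),
      phi k p = (algebraMap (Polynomial k) _ (1 - Polynomial.X)) ^ n * b →
      D b = psi k P →
      ∃ Q, P = Polynomial.C (1 - Polynomial.X) * Q := by
  intro n
  induction n with
  | zero =>
    intro b p P hp hb
    have h1 : algebraMap (Polynomial k) (MvPolynomial (Fin 2) (Polynomial k)) (1 - Polynomial.X)
        * phi k (Polynomial.derivative p) = psi k P := by
      rw [← D_phi D hpsi0 hDs, hp, pow_zero, one_mul, hb]
    have h2 : eta k (psi k P) = 0 := by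
      rw [← h1, map_mul, eta_w, zero_mul]
    rw [eta_psi] at h2
    exact dvd_of_map_eval_one P (comp_half_sq _ h2)
  | succ n ih =>
    intro b p P hp hb
    have hDb : D ((algebraMap (Polynomial k) _ (1 - Polynomial.X)) ^ (n+1) * b)
        = (algebraMap (Polynomial k) _ (1 - Polynomial.X)) ^ (n+1) * psi k P := by
      rw [← map_pow, D_alg_mul, hb, map_pow]
    have h1 : algebraMap (Polynomial k) (MvPolynomial (Fin 2) (Polynomial k)) (1 - Polynomial.X)
        * phi k (Polynomial.derivative p)
        = (algebraMap (Polynomial k) _ (1 - Polynomial.X)) ^ (n+1) * psi k P := by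
      rw [← D_phi D hpsi0 hDs, hp, hDb]
    have h2 : phi k (Polynomial.derivative p)
        = (algebraMap (Polynomial k) _ (1 - Polynomial.X)) ^ n * psi k P := by
      apply mul_left_cancel₀ (aBw_ne_zero (k := k))
      rw [h1]
      ring
    have h3 : phi k (Polynomial.derivative p)
        = phi k (Polynomial.C ((Polynomial.C (1 - Polynomial.X : Polynomial k)) ^ n * P)) := by
      rw [h2]
      simp only [phi, Polynomial.eval₂_C, Polynomial.eval₂_mul, Polynomial.eval₂_pow,
        map_mul, map_pow, psi_C]
    have h4 := phi_inj k _ _ h3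
    have h5 : Polynomial.derivative (p - Polynomial.C ((Polynomial.C (1 - Polynomial.X : Polynomial k)) ^ n * P) * Polynomial.X) = 0 := by
      rw [Polynomial.derivative_sub, Polynomial.derivative_C_mul_X, h4, sub_self]
    have h6 := Polynomial.eq_C_of_derivative_eq_zero h5
    set c0 := (p - Polynomial.C ((Polynomial.C (1 - Polynomial.X : Polynomial k)) ^ n * P) * Polynomial.X).coeff 0 with hc0def
    set g := (Polynomial.C (1 - Polynomial.X : Polynomial k)) ^ n * P with hgdef
    have hp' : p = Polynomial.C c0 + Polynomial.C g * Polynomial.X := by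
      linear_combination h6
    have h7 : eta k (phi k p) = 0 := by
      rw [hp, map_mul, map_pow, eta_w]
      simp
    have h8 : (c0.map (Polynomial.evalRingHom (1:k))).comp (Polynomial.C (2⁻¹:k) * Polynomial.X ^ 2)
        + (g.map (Polynomial.evalRingHom (1:k))).comp (Polynomial.C (2⁻¹:k) * Polynomial.X ^ 2)
          * (Polynomial.C (2⁻¹:k) * Polynomial.X ^ 2 + Polynomial.X) = 0 := by
      rw [← eta_psi, ← eta_psi, ← eta_sB, ← h7, hp']
      simp only [phi, Polynomial.eval₂_add, Polynomial.eval₂_mul, Polynomial.eval₂_C,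
        Polynomial.eval₂_X, map_add, map_mul]
    obtain ⟨hc0z, hgz⟩ := even_odd _ _ h8
    obtain ⟨c0', hc0'⟩ := dvd_of_map_eval_one c0 hc0z
    obtain ⟨g', hg'⟩ := dvd_of_map_eval_one g hgz
    have hnew : phi k (Polynomial.C c0' + Polynomial.C g' * Polynomial.X)
        = (algebraMap (Polynomial k) _ (1 - Polynomial.X)) ^ n * b := by
      apply mul_left_cancel₀ (aBw_ne_zero (k := k))
      have hstep : algebraMap (Polynomial k) (MvPolynomial (Fin 2) (Polynomial k)) (1 - Polynomial.X)
          * phi k (Polynomial.C c0' + Polynomial.C g' * Polynomial.X) = phi k p := by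
        rw [hp', hc0', hg']
        simp only [phi, Polynomial.eval₂_add, Polynomial.eval₂_mul, Polynomial.eval₂_C,
          Polynomial.eval₂_X, map_mul, psi_C]
        ring
      rw [hstep, hp, pow_succ]
      ring
    exact ih b _ P hnew hb

lemma D_part3
    (hDX1 : D (MvPolynomial.X 0)
      = algebraMap (Polynomial k) _ (Polynomial.X * (1 - Polynomial.X)))
    (hDX2 : D (MvPolynomial.X 1)
      = -(algebraMap (Polynomial k) _ Polynomial.X) * MvPolynomial.X 0
          + algebraMap (Polynomial k) _ (1 - Polynomial.X)) :
    D (algebraMap (Polynomial k) _ (Polynomial.C (2⁻¹:k)) * MvPolynomial.X 0 ^ 2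
        + algebraMap (Polynomial k) _ (1 - Polynomial.X) * MvPolynomial.X 1)
      = algebraMap (Polynomial k) _ ((1 - Polynomial.X) ^ 2) := by
  have h2 := half_two k
  simp only [map_add, D_alg_mul, pow_two, Derivation.leibniz, hDX1, hDX2, smul_eq_mul,
    Derivation.map_algebraMap, Derivation.map_one_eq_zero, mul_zero, zero_mul, sub_zero,
    add_zero, zero_add]
  simp only [map_mul, map_sub, map_one] at h2 ⊢
  linear_combination (MvPolynomial.X 0
      * algebraMap (Polynomial k) (MvPolynomial (Fin 2) (Polynomial k)) Polynomial.X
      * (1 - algebraMap (Polynomial k) (MvPolynomial (Fin 2) (Polynomial k)) Polynomial.X)) * h2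

end Stmt18Aux

/-- **Final example**: let `k` be a field of characteristic zero, `R = k[t]`,
`B = R[X_1,X_2]` and `D` the `R`-derivation with `DX_1 = t(1 − t)` and
`DX_2 = −tX_1 + 1 − t`; it is an irreducible quasi-nice locally nilpotent
`R`-derivation with `Ker D = R[F]`, where
`F = t(1 − t)X_2 + (t/2)X_1² − X_1 + tX_1`.  Then the plinth ideal `I_1` equals
`(1 − t)·Ker D`; in particular `I_1 ≠ t(1 − t)·Ker D` (indeed
`D((1/2)X_1² + (1 − t)X_2) = (1 − t)²`). -/
theorem stmt18 (k : Type*) [Field k] [CharZero k]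
    (t : Polynomial k) (ht : t = Polynomial.X)
    (D : Derivation (Polynomial k) (MvPolynomial (Fin 2) (Polynomial k))
        (MvPolynomial (Fin 2) (Polynomial k)))
    (hDX1 : D (MvPolynomial.X 0)
        = algebraMap (Polynomial k) (MvPolynomial (Fin 2) (Polynomial k)) (t * (1 - t)))
    (hDX2 : D (MvPolynomial.X 1)
        = - (algebraMap (Polynomial k) (MvPolynomial (Fin 2) (Polynomial k)) t)
            * MvPolynomial.X 0
          + algebraMap (Polynomial k) (MvPolynomial (Fin 2) (Polynomial k)) (1 - t))
    (hlnd : ∀ q, ∃ M : ℕ, (⇑D)^[M] q = 0)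
    (hirr : ∀ q : MvPolynomial (Fin 2) (Polynomial k),
      (∀ x, D x ∈ Ideal.span {q}) → IsUnit q)
    (hquasi : D (D (MvPolynomial.X 0)) = 0)
    (F : MvPolynomial (Fin 2) (Polynomial k))
    (hF : F = algebraMap _ _ (t * (1 - t)) * MvPolynomial.X 1
        + algebraMap (Polynomial k) (MvPolynomial (Fin 2) (Polynomial k))
            (Polynomial.C ((2 : k)⁻¹) * t) * MvPolynomial.X 0 ^ 2
        - MvPolynomial.X 0 + algebraMap _ _ t * MvPolynomial.X 0)
    (hker : ∀ q, D q = 0 ↔ q ∈ Algebra.adjoin (Polynomial k) {F}) :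
    {q : MvPolynomial (Fin 2) (Polynomial k) | D q = 0 ∧ q ∈ Set.range ⇑D}
      = {q : MvPolynomial (Fin 2) (Polynomial k) | ∃ c, D c = 0 ∧
          q = algebraMap _ _ (1 - t) * c} ∧
    {q : MvPolynomial (Fin 2) (Polynomial k) | D q = 0 ∧ q ∈ Set.range ⇑D}
      ≠ {q : MvPolynomial (Fin 2) (Polynomial k) | ∃ c, D c = 0 ∧
          q = algebraMap _ _ (t * (1 - t)) * c} ∧
    D (algebraMap (Polynomial k) (MvPolynomial (Fin 2) (Polynomial k))
          (Polynomial.C ((2 : k)⁻¹)) * MvPolynomial.X 0 ^ 2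
        + algebraMap _ _ (1 - t) * MvPolynomial.X 1)
      = algebraMap _ _ ((1 - t) ^ 2) := by
  subst ht
  have hFB : F = Stmt18Aux.FB k := hF
  have hDs : D (Stmt18Aux.sB k)
      = algebraMap (Polynomial k) _ (1 - Polynomial.X) :=
    Stmt18Aux.D_sB D hDX1 hDX2
  have hpsi0 : ∀ q, D (Stmt18Aux.psi k q) = 0 := by
    intro q
    refine (hker _).mpr ?_
    rw [hFB, Algebra.adjoin_singleton_eq_range_aeval]
    exact ⟨q, rfl⟩
  have hpart1 : {q : MvPolynomial (Fin 2) (Polynomial k) | D q = 0 ∧ q ∈ Set.range ⇑D}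
      = {q : MvPolynomial (Fin 2) (Polynomial k) | ∃ c, D c = 0 ∧
          q = algebraMap (Polynomial k) (MvPolynomial (Fin 2) (Polynomial k))
            (1 - Polynomial.X) * c} := by
    ext q
    simp only [Set.mem_setOf_eq]
    constructor
    · rintro ⟨hq0, b, hb⟩
      have hq' : q ∈ Algebra.adjoin (Polynomial k) {F} := (hker q).mp hq0
      rw [hFB, Algebra.adjoin_singleton_eq_range_aeval] at hq'
      obtain ⟨P, hP⟩ := hq'
      obtain ⟨n, p, hp⟩ := Stmt18Aux.phi_exists k b
      have hDb : D b = Stmt18Aux.psi k P := by rw [hb, ← hP]; rfl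
      obtain ⟨Q, hQ⟩ := Stmt18Aux.IND D hpsi0 hDs n b p P hp hDb
      refine ⟨Stmt18Aux.psi k Q, hpsi0 Q, ?_⟩
      rw [← hP, hQ]
      show Stmt18Aux.psi k (Polynomial.C (1 - Polynomial.X) * Q) = _
      rw [map_mul, Stmt18Aux.psi_C]
    · rintro ⟨c, hc, rfl⟩
      refine ⟨?_, ⟨Stmt18Aux.sB k * c, ?_⟩⟩
      · rw [Stmt18Aux.D_alg_mul D, hc, mul_zero]
      · rw [Derivation.leibniz, hc, hDs]
        simp only [smul_eq_mul, mul_zero, zero_add]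
        ring
  refine ⟨hpart1, ?_, Stmt18Aux.D_part3 D hDX1 hDX2⟩
  intro heq
  have heq2 : {q : MvPolynomial (Fin 2) (Polynomial k) | ∃ c, D c = 0 ∧
          q = algebraMap (Polynomial k) (MvPolynomial (Fin 2) (Polynomial k))
            (1 - Polynomial.X) * c}
      = {q : MvPolynomial (Fin 2) (Polynomial k) | ∃ c, D c = 0 ∧
          q = algebraMap (Polynomial k) (MvPolynomial (Fin 2) (Polynomial k))
            (Polynomial.X * (1 - Polynomial.X)) * c} :=
    hpart1.symm.trans heq
  have hmem : (algebraMap (Polynomial k) (MvPolynomial (Fin 2) (Polynomial k)) (1 - Polynomial.X)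
        * algebraMap (Polynomial k) (MvPolynomial (Fin 2) (Polynomial k)) (1 - Polynomial.X))
      ∈ {q : MvPolynomial (Fin 2) (Polynomial k) | ∃ c, D c = 0 ∧
          q = algebraMap (Polynomial k) (MvPolynomial (Fin 2) (Polynomial k))
            (1 - Polynomial.X) * c} :=
    ⟨algebraMap (Polynomial k) (MvPolynomial (Fin 2) (Polynomial k)) (1 - Polynomial.X),
      D.map_algebraMap _, rfl⟩
  rw [heq2] at hmem
  obtain ⟨c, hc, hce⟩ := hmem
  have h1 := congrArg (MvPolynomial.eval (fun _ => (0:Polynomial k))) hce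
  simp only [map_mul, MvPolynomial.algebraMap_eq, MvPolynomial.eval_C] at h1
  have h2 := congrArg (Polynomial.eval (0:k)) h1
  simp at h2
end
end
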